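/- arXiv:2405.16167 — 12 statements merged into one kernel-verified Lean document; each statement's English description precedes it below -/
import Mathlib

section
/- Let S₀, S₁, S₂ be three pairwise distinct circles in the Euclidean plane ℝ², all of the same radius R > 0, that have a common point O*. For each pair of circles, let vₖ denote their second intersection point (i.e. vₖ ∈ Sᵢ ∩ Sⱼ with vₖ ≠ O*, for {i,j,k} = {0,1,2}), and assume v₀, v₁, v₂ are affinely independent. Then the circumradius of the triangle with vertices v₀, v₁, v₂ equals R, and O* is the orthocenter of this triangle. -/
/-!
Two circles of radius `R` through `O` with centers `c i`, `c j` are swapped by the point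
reflection in the midpoint of `c i c j`, so their second intersection is `v k = c i + c j - O`.
Hence `v k - N = O - c k` for `N = c 0 + c 1 + c 2 - 2 • O`: all three `v k` lie on the circle of
radius `R` about `N`, which is therefore the circumcircle. The orthocenter of a triangle is
`v 0 + v 1 + v 2 - 2 • circumcenter` (Euler line), and this equals `O`.
-/

open EuclideanGeometry Module

section
variable {V : Type*} [NormedAddCommGroup V] [InnerProductSpace ℝ V]

/- `p ↦ a + b - p` preserves both circles, which share at most the two points `x`, `y`. -/
theorem add_eq_add_of_dist_eq_of_finrank_eq_two [FiniteDimensional ℝ V] (hd : finrank ℝ V = 2)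
    {a b x y : V} {R : ℝ} (hab : a ≠ b) (hxy : x ≠ y)
    (hxa : dist x a = R) (hxb : dist x b = R) (hya : dist y a = R) (hyb : dist y b = R) :
    x + y = a + b := by
  have reflect : ∀ p, dist p a = R → dist p b = R → a + b - p = x ∨ a + b - p = y := by
    intro p hpa hpb
    have hra : dist (a + b - p) a = R := by
      rw [← hpb, dist_eq_norm, dist_eq_norm']
      congr 1; abel
    have hrb : dist (a + b - p) b = R := by
      rw [← hpa, dist_eq_norm, dist_eq_norm']
      congr 1; abel
    exact eq_of_dist_eq_of_dist_eq_of_finrank_eq_two hd hab hxy hxa hya hra hxb hyb hrb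
  obtain hx | hx := reflect x hxa hxb
  · refine absurd ?_ hxy
    obtain hy | hy := reflect y hya hyb
    · linear_combination (norm := module) hy - hx
    · linear_combination (norm := module) (2⁻¹ : ℝ) • (hy - hx)
  · rw [← hx]; abel

theorem Affine.Triangle.orthocenter_eq_sum_sub_two_smul_circumcenter (t : Affine.Triangle ℝ V) :
    t.orthocenter = ∑ i, t.points i - (2 : ℝ) • t.circumcenter := by
  rw [orthocenter_eq_smul_vsub_vadd_circumcenter, Finset.centroid_def,
    Finset.affineCombination_apply]
  simp only [Finset.weightedVSubOfPoint_apply, Fin.sum_univ_three, Finset.centroidWeights_apply,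
    Finset.card_univ, Fintype.card_fin, Nat.cast_ofNat, vsub_eq_sub, vadd_eq_add]
  rw [Fin.sum_univ_three]
  module

end

theorem johnson_three_circles_general
    (R : ℝ)
    (c : Fin 3 → EuclideanSpace ℝ (Fin 2))
    (hc : Function.Injective c)
    (O : EuclideanSpace ℝ (Fin 2))
    (hO : ∀ i, dist O (c i) = R)
    (v : Fin 3 → EuclideanSpace ℝ (Fin 2))
    (hv : ∀ k i, i ≠ k → dist (v k) (c i) = R)
    (hvO : ∀ k, v k ≠ O)
    (hind : AffineIndependent ℝ v) :
    (⟨v, hind⟩ : Affine.Triangle ℝ (EuclideanSpace ℝ (Fin 2))).circumradius = R ∧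
    Affine.Triangle.orthocenter (⟨v, hind⟩ : Affine.Triangle ℝ (EuclideanSpace ℝ (Fin 2))) = O := by
  have hpair (k i j : Fin 3) (hik : i ≠ k) (hjk : j ≠ k) (hij : i ≠ j) : v k + O = c i + c j :=
    add_eq_add_of_dist_eq_of_finrank_eq_two finrank_euclideanSpace_fin (hc.ne hij) (hvO k)
      (hv k i hik) (hv k j hjk) (hO i) (hO j)
  set t : Affine.Triangle ℝ (EuclideanSpace ℝ (Fin 2)) := ⟨v, hind⟩
  set N := c 0 + c 1 + c 2 - (2 : ℝ) • O with hN
  have hvN (k : Fin 3) : v k - N = O - c k := by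
    fin_cases k <;> simp only [Fin.zero_eta, Fin.mk_one, Fin.reduceFinMk]
    · linear_combination (norm := module) hpair 0 1 2 (by decide) (by decide) (by decide) - hN
    · linear_combination (norm := module) hpair 1 0 2 (by decide) (by decide) (by decide) - hN
    · linear_combination (norm := module) hpair 2 0 1 (by decide) (by decide) (by decide) - hN
  have hdist (k : Fin 3) : dist (t.points k) N = R := by
    rw [← hO k, dist_eq_norm, dist_eq_norm]
    exact congrArg norm (hvN k)
  have hNt : N ∈ affineSpan ℝ (Set.range t.points) := by
    rw [t.span_eq_top finrank_euclideanSpace_fin]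
    exact AffineSubspace.mem_top _ _ _
  refine ⟨(t.eq_circumradius_of_dist_eq hNt hdist).symm, ?_⟩
  rw [t.orthocenter_eq_sum_sub_two_smul_circumcenter, ← t.eq_circumcenter_of_dist_eq hNt hdist,
    Fin.sum_univ_three]
  linear_combination (norm := module) hvN 0 + hvN 1 + hvN 2 + hN

/-- **Johnson's three circles theorem.** If three pairwise distinct circles in the
Euclidean plane, all of radius `R > 0` and with centers `c 0, c 1, c 2`, pass through a
common point `O`, and `v k` is the second intersection point of the two circles with
centers `c i`, `i ≠ k` (so `v k ≠ O`), with `v 0, v 1, v 2` affinely independent, then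
the triangle with vertices `v 0, v 1, v 2` has circumradius `R` and orthocenter `O`. -/
theorem johnson_three_circles
    (R : ℝ) (hR : 0 < R)
    (c : Fin 3 → EuclideanSpace ℝ (Fin 2))
    (hc : Function.Injective c)
    (O : EuclideanSpace ℝ (Fin 2))
    (hO : ∀ i, dist O (c i) = R)
    (v : Fin 3 → EuclideanSpace ℝ (Fin 2))
    (hv : ∀ k i, i ≠ k → dist (v k) (c i) = R)
    (hvO : ∀ k, v k ≠ O)
    (hind : AffineIndependent ℝ v) :
    (⟨v, hind⟩ : Affine.Triangle ℝ (EuclideanSpace ℝ (Fin 2))).circumradius = R ∧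
    Affine.Triangle.orthocenter (⟨v, hind⟩ : Affine.Triangle ℝ (EuclideanSpace ℝ (Fin 2))) = O :=
  johnson_three_circles_general R c hc O hO v hv hvO hind
end

section
/- Let v₀, …, vₙ be n+1 affinely independent points in ℝⁿ with squared pairwise distances d_{ij} = ‖vᵢ − vⱼ‖² for 0 ≤ i < j ≤ n, and let D₀, …, Dₙ ≥ 0 be real numbers. Then there exists a point v ∈ ℝⁿ with ‖v − vᵢ‖² = Dᵢ for all i = 0, …, n if and only if the determinant of the (n+3)×(n+3) augmented Cayley–Menger matrix is zero, where this matrix has first row (0, 1, 1, …, 1), second row (1, 0, D₀, D₁, …, Dₙ), and for i = 0, …, n the (i+3)-rd row is (1, Dᵢ, d_{i0}, …, d_{in}) with the convention d_{ii} = 0 and d_{ij} = d_{ji}. -/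
/-!
Affine independence makes the homogeneous coordinate matrix `(1 | vᵢ)` invertible. Solving a
linear system with it gives a point `p` and a constant `t` with `Dᵢ = ‖p - vᵢ‖² + t` for all `i`.

Lift a point `x` to `(‖x‖² + s, r, 1, x) ∈ ℝⁿ⁺³` and the apex to `(1, 0, 0, 0)`, and pair lifts by
`a₀b₂ + a₂b₀ - 2t a₁b₁ - 2⟨a, b⟩`. Lifts with parameters `(s, r)` and `(s', r')` then pair to
`‖x - y‖² + s + s' - 2t r r'`, so the augmented Cayley–Menger matrix is the Gram matrix of the
apex, of `p` lifted with `(t, 1)` (the extra coordinate makes it isotropic) and of the `vᵢ` lifted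
with `(0, 0)`. The lift matrix is block triangular over `(1 | vᵢ)`, hence the determinant equals
`2 (-2)ⁿ t det(1 | vᵢ)²`. It vanishes iff `t = 0`, i.e. iff `p` realizes the distances `Dᵢ`.
-/

open Matrix
open scoped RealInnerProductSpace

namespace CayleyMenger

variable {n : ℕ}

lemma inner_eq_sum_mul (x y : EuclideanSpace ℝ (Fin n)) : ⟪x, y⟫ = ∑ k, x k * y k := by
  simp [EuclideanSpace.inner_eq_star_dotProduct, dotProduct, mul_comm]

def homogeneousMatrix (v : Fin (n + 1) → EuclideanSpace ℝ (Fin n)) :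
    Matrix (Fin (n + 1)) (Fin (n + 1)) ℝ :=
  of fun i => Fin.cons 1 (v i)

lemma det_homogeneousMatrix_ne_zero {v : Fin (n + 1) → EuclideanSpace ℝ (Fin n)}
    (hv : AffineIndependent ℝ v) : (homogeneousMatrix v).det ≠ 0 := by
  rw [Ne, ← exists_vecMul_eq_zero_iff]
  rintro ⟨w, hw, hwv⟩
  have hsum : ∑ i, w i = 0 := by
    simpa [vecMul, dotProduct, homogeneousMatrix] using congrFun hwv 0
  have hcomb : ∑ i, w i • v i = 0 := by
    ext k
    simpa [vecMul, dotProduct, homogeneousMatrix, mul_comm] using congrFun hwv k.succ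
  exact hw (funext fun i => hv.eq_zero_of_sum_eq_zero hsum hcomb i (Finset.mem_univ i))

lemma homogeneousMatrix_mulVec_apply (v : Fin (n + 1) → EuclideanSpace ℝ (Fin n))
    (x : Fin (n + 1) → ℝ) (i : Fin (n + 1)) :
    (homogeneousMatrix v *ᵥ x) i = x 0 + ⟪v i, WithLp.toLp 2 (Fin.tail x)⟫ := by
  simp [homogeneousMatrix, mulVec, dotProduct, Fin.sum_univ_succ, inner_eq_sum_mul, Fin.tail]

lemma exists_dist_sq_add_const {v : Fin (n + 1) → EuclideanSpace ℝ (Fin n)}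
    (hv : AffineIndependent ℝ v) (D : Fin (n + 1) → ℝ) :
    ∃ p t, ∀ i, D i = dist p (v i) ^ 2 + t := by
  obtain ⟨x, hx⟩ := mulVec_surjective_iff_isUnit.mpr
    ((homogeneousMatrix v).isUnit_iff_isUnit_det.mpr (det_homogeneousMatrix_ne_zero hv).isUnit)
    (fun i => (‖v i‖ ^ 2 - D i) / 2)
  set p : EuclideanSpace ℝ (Fin n) := WithLp.toLp 2 (Fin.tail x)
  refine ⟨p, -2 * x 0 - ‖p‖ ^ 2, fun i => ?_⟩
  have hi := congrFun hx i
  rw [homogeneousMatrix_mulVec_apply] at hi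
  rw [dist_eq_norm, norm_sub_sq_real, real_inner_comm]
  linarith

def weights (t : ℝ) : Fin (n + 3) → ℝ :=
  Fin.cons 1 (Fin.cons (-2 * t) (Fin.cons 1 fun _ => -2))

def pairing (t : ℝ) (a b : Fin (n + 3) → ℝ) : ℝ :=
  ∑ k, a k * weights t k * b (Equiv.swap 0 2 k)

lemma pairing_cons (t a₀ a₁ a₂ b₀ b₁ b₂ : ℝ) (a b : Fin n → ℝ) :
    pairing t (Fin.cons a₀ (Fin.cons a₁ (Fin.cons a₂ a)))
        (Fin.cons b₀ (Fin.cons b₁ (Fin.cons b₂ b))) =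
      a₀ * b₂ - 2 * t * a₁ * b₁ + a₂ * b₀ - 2 * ∑ k, a k * b k := by
  -- `Fin.cons_succ` cannot see through the numeral `2`
  rw [pairing, show (2 : Fin (n + 3)) = Fin.succ (Fin.succ 0) from rfl]
  simp only [Fin.sum_univ_succ, Equiv.swap_apply_def, Fin.succ_inj, Fin.succ_ne_zero,
    (Fin.succ_ne_zero _).symm, if_true, if_false, weights, Fin.cons_zero, Fin.cons_succ]
  simp only [mul_neg, neg_mul, Finset.sum_neg_distrib, mul_comm _ (2 : ℝ), mul_assoc,
    ← Finset.mul_sum]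
  ring

noncomputable def gram (t : ℝ) (A : Matrix (Fin (n + 3)) (Fin (n + 3)) ℝ) :
    Matrix (Fin (n + 3)) (Fin (n + 3)) ℝ :=
  A * diagonal (weights t) * (A.submatrix id (Equiv.swap 0 2))ᵀ

lemma gram_apply (t : ℝ) (A : Matrix (Fin (n + 3)) (Fin (n + 3)) ℝ) (i j : Fin (n + 3)) :
    gram t A i j = pairing t (fun k => A i k) (fun k => A j k) := by
  rw [gram, mul_apply]
  simp only [mul_diagonal, transpose_apply, submatrix_apply, id]
  rfl

lemma det_gram (t : ℝ) (A : Matrix (Fin (n + 3)) (Fin (n + 3)) ℝ) :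
    (gram t A).det = 2 * (-2) ^ n * t * A.det ^ 2 := by
  have hsign : Equiv.Perm.sign (Equiv.swap (0 : Fin (n + 3)) 2) = -1 :=
    Equiv.Perm.sign_swap (Fin.succ_ne_zero (Fin.succ 0)).symm
  rw [gram, det_mul, det_mul, det_transpose, det_permute', hsign, det_diagonal]
  simp only [weights, Fin.prod_univ_succ, Fin.cons_zero, Fin.cons_succ, Finset.prod_const,
    Finset.card_univ, Fintype.card_fin]
  push_cast
  ring

noncomputable def lift (x : EuclideanSpace ℝ (Fin n)) (s r : ℝ) : Fin (n + 3) → ℝ :=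
  Fin.cons (‖x‖ ^ 2 + s) (Fin.cons r (Fin.cons 1 x))

def apex : Fin (n + 3) → ℝ := Fin.cons 1 (Fin.cons 0 (Fin.cons 0 0))

lemma pairing_apex_apex (t : ℝ) : pairing t apex (apex : Fin (n + 3) → ℝ) = 0 := by
  simp [pairing_cons, apex]

lemma pairing_apex_lift (t : ℝ) (y : EuclideanSpace ℝ (Fin n)) (s r : ℝ) :
    pairing t apex (lift y s r) = 1 := by
  simp [pairing_cons, apex, lift]

lemma pairing_lift_apex (t : ℝ) (x : EuclideanSpace ℝ (Fin n)) (s r : ℝ) :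
    pairing t (lift x s r) apex = 1 := by
  simp [pairing_cons, apex, lift]

lemma pairing_lift_lift (t : ℝ) (x y : EuclideanSpace ℝ (Fin n)) (s r s' r' : ℝ) :
    pairing t (lift x s r) (lift y s' r') = dist x y ^ 2 + s + s' - 2 * t * r * r' := by
  simp only [pairing_cons, lift, dist_eq_norm, norm_sub_sq_real, inner_eq_sum_mul]
  ring

noncomputable def liftMatrix (v : Fin (n + 1) → EuclideanSpace ℝ (Fin n))
    (p : EuclideanSpace ℝ (Fin n)) (t : ℝ) : Matrix (Fin (n + 3)) (Fin (n + 3)) ℝ :=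
  of (Fin.cons apex (Fin.cons (lift p t 1) fun i => lift (v i) 0 0))

lemma det_liftMatrix (v : Fin (n + 1) → EuclideanSpace ℝ (Fin n))
    (p : EuclideanSpace ℝ (Fin n)) (t : ℝ) :
    (liftMatrix v p t).det = (homogeneousMatrix v).det := by
  rw [det_succ_row_zero]
  simp only [liftMatrix, apex, Fin.sum_univ_succ, of_apply, Fin.cons_zero, Fin.cons_succ,
    Pi.zero_apply, mul_zero, zero_mul, Finset.sum_const_zero, add_zero, Fin.val_zero, pow_zero,
    one_mul, Fin.succAbove_zero]
  rw [det_succ_column_zero, Fin.sum_univ_succ]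
  simp only [lift, submatrix_apply, of_apply, Fin.cons_zero, Fin.cons_succ, mul_zero, zero_mul,
    Finset.sum_const_zero, add_zero, Fin.val_zero, pow_zero, one_mul, Fin.succAbove_zero]
  rfl

noncomputable def cayleyMengerMatrix (v : Fin (n + 1) → EuclideanSpace ℝ (Fin n))
    (D : Fin (n + 1) → ℝ) : Matrix (Fin (n + 3)) (Fin (n + 3)) ℝ :=
  of (Fin.cons (Fin.cons 0 fun _ => 1)
    (Fin.cons (Fin.cons 1 (Fin.cons 0 fun j => D j))
      (fun i : Fin (n + 1) =>
        Fin.cons 1 (Fin.cons (D i) fun j : Fin (n + 1) => dist (v i) (v j) ^ 2))))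

lemma cayleyMengerMatrix_eq_gram (v : Fin (n + 1) → EuclideanSpace ℝ (Fin n))
    (p : EuclideanSpace ℝ (Fin n)) (t : ℝ) :
    cayleyMengerMatrix v (fun i => dist p (v i) ^ 2 + t) = gram t (liftMatrix v p t) := by
  ext i j
  rw [gram_apply]
  refine Fin.cases ?_ (Fin.cases ?_ fun i => ?_) i <;>
    refine Fin.cases ?_ (Fin.cases ?_ fun j => ?_) j <;>
    simp [cayleyMengerMatrix, liftMatrix, pairing_apex_apex, pairing_apex_lift,
      pairing_lift_apex, pairing_lift_lift, dist_comm, two_mul]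

lemma det_cayleyMengerMatrix {v : Fin (n + 1) → EuclideanSpace ℝ (Fin n)}
    {D : Fin (n + 1) → ℝ} {p : EuclideanSpace ℝ (Fin n)} {t : ℝ}
    (hD : ∀ i, D i = dist p (v i) ^ 2 + t) :
    (cayleyMengerMatrix v D).det = 2 * (-2) ^ n * t * (homogeneousMatrix v).det ^ 2 := by
  rw [funext hD, cayleyMengerMatrix_eq_gram, det_gram, det_liftMatrix]

end CayleyMenger

theorem cayley_menger_exists_point_iff_det_eq_zero_general
    (n : ℕ) (v : Fin (n + 1) → EuclideanSpace ℝ (Fin n))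
    (hv : AffineIndependent ℝ v)
    (D : Fin (n + 1) → ℝ) :
    (∃ p : EuclideanSpace ℝ (Fin n), ∀ i, dist p (v i) ^ 2 = D i) ↔
      (Matrix.of
        (Fin.cons (Fin.cons 0 fun _ => 1)
          (Fin.cons (Fin.cons 1 (Fin.cons 0 fun j => D j))
            (fun i : Fin (n + 1) =>
              Fin.cons 1 (Fin.cons (D i) fun j : Fin (n + 1) => dist (v i) (v j) ^ 2)))) :
        Matrix (Fin (n + 3)) (Fin (n + 3)) ℝ).det = 0 := by
  change _ ↔ (CayleyMenger.cayleyMengerMatrix v D).det = 0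
  obtain ⟨p, t, hpt⟩ := CayleyMenger.exists_dist_sq_add_const hv D
  constructor
  · rintro ⟨q, hq⟩
    rw [CayleyMenger.det_cayleyMengerMatrix (t := 0) fun i => by rw [add_zero, hq], mul_zero,
      zero_mul]
  · intro hdet
    have ht : t = 0 := by
      simpa [CayleyMenger.det_cayleyMengerMatrix hpt,
        CayleyMenger.det_homogeneousMatrix_ne_zero hv] using hdet
    exact ⟨p, fun i => by rw [hpt, ht, add_zero]⟩

/-- Cayley–Menger criterion: given `n + 1` affinely independent points of `ℝⁿ` and
nonnegative prescribed squared distances `D i`, a point realizing those squared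
distances exists iff the determinant of the augmented Cayley–Menger matrix vanishes.
The matrix has first row `(0, 1, …, 1)`, second row `(1, 0, D 0, …, D n)` and
remaining rows `(1, D i, d i 0, …, d i n)` with `d i j = ‖v i − v j‖²`. -/
theorem cayley_menger_exists_point_iff_det_eq_zero
    (n : ℕ) (v : Fin (n + 1) → EuclideanSpace ℝ (Fin n))
    (hv : AffineIndependent ℝ v)
    (D : Fin (n + 1) → ℝ) (hD : ∀ i, 0 ≤ D i) :
    (∃ p : EuclideanSpace ℝ (Fin n), ∀ i, dist p (v i) ^ 2 = D i) ↔
      (Matrix.of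
        (Fin.cons (Fin.cons 0 fun _ => 1)
          (Fin.cons (Fin.cons 1 (Fin.cons 0 fun j => D j))
            (fun i : Fin (n + 1) =>
              Fin.cons 1 (Fin.cons (D i) fun j : Fin (n + 1) => dist (v i) (v j) ^ 2)))) :
        Matrix (Fin (n + 3)) (Fin (n + 3)) ℝ).det = 0 :=
  cayley_menger_exists_point_iff_det_eq_zero_general n v hv D
end

section
/- Let v₀, v₁, v₂ be non-collinear points in the Euclidean plane ℝ² with circumradius R_T, and let r > 0. Suppose there exist a point P ∈ ℝ² and points w₀, w₁, w₂ ∈ ℝ² such that for each k ∈ {0,1,2}, dist(wₖ, vᵢ) = r for both indices i ≠ k and dist(wₖ, P) = r (i.e. P lies simultaneously on a circle of radius r through v₁,v₂, on a circle of radius r through v₀,v₂, and on a circle of radius r through v₀,v₁). Then r = R_T. -/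
lemma real_two_circles (a0 a1 b0 b1 x0 x1 y0 y1 r : ℝ)
    (hxa : (a0 - x0)^2 + (a1 - x1)^2 = r^2)
    (hxb : (b0 - x0)^2 + (b1 - x1)^2 = r^2)
    (hya : (a0 - y0)^2 + (a1 - y1)^2 = r^2)
    (hyb : (b0 - y0)^2 + (b1 - y1)^2 = r^2)
    (hne : a0 ≠ b0 ∨ a1 ≠ b1) :
    (y0 = x0 ∧ y1 = x1) ∨ (y0 = a0 + b0 - x0 ∧ y1 = a1 + b1 - x1) := by
  have hx2 : (a0 - x0)^2 + (a1 - x1)^2 = (b0 - x0)^2 + (b1 - x1)^2 := by rw [hxa, hxb]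
  have hy2 : (a0 - y0)^2 + (a1 - y1)^2 = (b0 - y0)^2 + (b1 - y1)^2 := by rw [hya, hyb]
  have hcross : (2*x0 - a0 - b0)*(2*y1 - a1 - b1) - (2*x1 - a1 - b1)*(2*y0 - a0 - b0) = 0 := by
    rcases hne with h | h
    · have h' : a0 - b0 ≠ 0 := sub_ne_zero.mpr h
      have hmul : (a0 - b0) * ((2*x0 - a0 - b0)*(2*y1 - a1 - b1) - (2*x1 - a1 - b1)*(2*y0 - a0 - b0)) = 0 := by
        linear_combination (2*x1 - a1 - b1) * hy2 - (2*y1 - a1 - b1) * hx2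
      exact (mul_eq_zero.mp hmul).resolve_left h'
    · have h' : a1 - b1 ≠ 0 := sub_ne_zero.mpr h
      have hmul : (a1 - b1) * ((2*x0 - a0 - b0)*(2*y1 - a1 - b1) - (2*x1 - a1 - b1)*(2*y0 - a0 - b0)) = 0 := by
        linear_combination (2*y0 - a0 - b0) * hx2 - (2*x0 - a0 - b0) * hy2
      exact (mul_eq_zero.mp hmul).resolve_left h'
  have hnorm : (2*x0 - a0 - b0)^2 + (2*x1 - a1 - b1)^2 = (2*y0 - a0 - b0)^2 + (2*y1 - a1 - b1)^2 := by
    linear_combination 2*hxa + 2*hxb - 2*hya - 2*hyb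
  have hprod : ((y0 - x0)^2 + (y1 - x1)^2) * ((x0 + y0 - a0 - b0)^2 + (x1 + y1 - a1 - b1)^2) = 0 := by
    linear_combination (((2*x0 - a0 - b0)^2 + (2*x1 - a1 - b1)^2 - (2*y0 - a0 - b0)^2 - (2*y1 - a1 - b1)^2)/16) * hnorm + (((2*x0 - a0 - b0)*(2*y1 - a1 - b1) - (2*x1 - a1 - b1)*(2*y0 - a0 - b0))/4) * hcross
  rcases mul_eq_zero.mp hprod with h | h
  · left
    have e0 : (y0 - x0)^2 = 0 :=
      le_antisymm (by linarith [sq_nonneg (y1 - x1)]) (sq_nonneg _)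
    have e1 : (y1 - x1)^2 = 0 :=
      le_antisymm (by linarith [sq_nonneg (y0 - x0)]) (sq_nonneg _)
    have f0 : y0 - x0 = 0 := by
      exact pow_eq_zero_iff (by norm_num) |>.mp e0
    have f1 : y1 - x1 = 0 := by
      exact pow_eq_zero_iff (by norm_num) |>.mp e1
    exact ⟨by linarith, by linarith⟩
  · right
    have e0 : (x0 + y0 - a0 - b0)^2 = 0 :=
      le_antisymm (by linarith [sq_nonneg (x1 + y1 - a1 - b1)]) (sq_nonneg _)
    have e1 : (x1 + y1 - a1 - b1)^2 = 0 :=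
      le_antisymm (by linarith [sq_nonneg (x0 + y0 - a0 - b0)]) (sq_nonneg _)
    have f0 : x0 + y0 - a0 - b0 = 0 := by
      exact pow_eq_zero_iff (by norm_num) |>.mp e0
    have f1 : x1 + y1 - a1 - b1 = 0 := by
      exact pow_eq_zero_iff (by norm_num) |>.mp e1
    exact ⟨by linarith, by linarith⟩

lemma sq_dist (x y : EuclideanSpace ℝ (Fin 2)) {r : ℝ} (h : dist x y = r) :
    (x 0 - y 0)^2 + (x 1 - y 1)^2 = r^2 := by
  rw [EuclideanSpace.dist_eq, Fin.sum_univ_two] at h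
  have h2 := congrArg (·^2) h
  simp only at h2
  rw [Real.sq_sqrt (by positivity)] at h2
  simpa [Real.dist_eq, sq_abs] using h2

lemma two_circles {a b x y : EuclideanSpace ℝ (Fin 2)} {r : ℝ} (hab : a ≠ b)
    (hxa : dist a x = r) (hxb : dist b x = r)
    (hya : dist a y = r) (hyb : dist b y = r) :
    y = x ∨ y = a + b - x := by
  have hne : a 0 ≠ b 0 ∨ a 1 ≠ b 1 := by
    by_contra hc
    push_neg at hc
    exact hab (by ext i; fin_cases i <;> simp [hc.1, hc.2])
  rcases real_two_circles (a 0) (a 1) (b 0) (b 1) (x 0) (x 1) (y 0) (y 1) r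
      (sq_dist a x hxa) (sq_dist b x hxb) (sq_dist a y hya) (sq_dist b y hyb) hne with
    ⟨h0, h1⟩ | ⟨h0, h1⟩
  · left; ext i; fin_cases i <;> assumption
  · right; ext i; fin_cases i <;> simpa

/-- If `P` lies simultaneously on circles of radius `r > 0` through each of the three
pairs of vertices of a nondegenerate plane triangle, then `r` is the circumradius. -/
theorem radius_eq_circumradius_of_common_point
    (v : Fin 3 → EuclideanSpace ℝ (Fin 2))
    (hv : AffineIndependent ℝ v)
    (r : ℝ) (hr : 0 < r)
    (P : EuclideanSpace ℝ (Fin 2)) (w : Fin 3 → EuclideanSpace ℝ (Fin 2))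
    (hw : ∀ k i, i ≠ k → dist (w k) (v i) = r)
    (hwP : ∀ k, dist (w k) P = r) :
    r = (⟨v, hv⟩ : Affine.Triangle ℝ (EuclideanSpace ℝ (Fin 2))).circumradius := by
  have htop : affineSpan ℝ (Set.range v) = ⊤ :=
    hv.affineSpan_eq_top_iff_card_eq_finrank_add_one.mpr (by simp)
  have final3 : ∀ c : EuclideanSpace ℝ (Fin 2), dist c (v 0) = r → dist c (v 1) = r →
      dist c (v 2) = r →
      r = (⟨v, hv⟩ : Affine.Triangle ℝ (EuclideanSpace ℝ (Fin 2))).circumradius := by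
    intro c h0 h1 h2
    refine Affine.Simplex.eq_circumradius_of_dist_eq (p := c) _ ?_ ?_
    · show c ∈ affineSpan ℝ (Set.range v)
      rw [htop]; trivial
    · intro i
      rw [dist_comm]
      fin_cases i <;> assumption
  by_cases h01 : w 0 = w 1
  · exact final3 (w 0) (by rw [h01]; exact hw 1 0 (by decide)) (hw 0 1 (by decide))
      (hw 0 2 (by decide))
  by_cases h02 : w 0 = w 2
  · exact final3 (w 0) (by rw [h02]; exact hw 2 0 (by decide)) (hw 0 1 (by decide))
      (hw 0 2 (by decide))
  by_cases h12 : w 1 = w 2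
  · exact final3 (w 1) (hw 1 0 (by decide)) (by rw [h12]; exact hw 2 1 (by decide))
      (hw 1 2 (by decide))
  have k0 : v 0 = P ∨ v 0 = w 1 + w 2 - P :=
    two_circles h12 (hwP 1) (hwP 2) (hw 1 0 (by decide)) (hw 2 0 (by decide))
  have k1 : v 1 = P ∨ v 1 = w 0 + w 2 - P :=
    two_circles h02 (hwP 0) (hwP 2) (hw 0 1 (by decide)) (hw 2 1 (by decide))
  have k2 : v 2 = P ∨ v 2 = w 0 + w 1 - P :=
    two_circles h01 (hwP 0) (hwP 1) (hw 0 2 (by decide)) (hw 1 2 (by decide))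
  rcases k0 with h0 | h0
  · exact final3 (w 0) (by rw [h0]; exact hwP 0) (hw 0 1 (by decide)) (hw 0 2 (by decide))
  rcases k1 with h1 | h1
  · exact final3 (w 1) (hw 1 0 (by decide)) (by rw [h1]; exact hwP 1) (hw 1 2 (by decide))
  rcases k2 with h2 | h2
  · exact final3 (w 2) (hw 2 0 (by decide)) (hw 2 1 (by decide)) (by rw [h2]; exact hwP 2)
  refine final3 (w 0 + w 1 + w 2 - P - P) ?_ ?_ ?_
  · rw [h0, dist_eq_norm, show w 0 + w 1 + w 2 - P - P - (w 1 + w 2 - P) = w 0 - P by abel,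
      ← dist_eq_norm]
    exact hwP 0
  · rw [h1, dist_eq_norm, show w 0 + w 1 + w 2 - P - P - (w 0 + w 2 - P) = w 1 - P by abel,
      ← dist_eq_norm]
    exact hwP 1
  · rw [h2, dist_eq_norm, show w 0 + w 1 + w 2 - P - P - (w 0 + w 1 - P) = w 2 - P by abel,
      ← dist_eq_norm]
    exact hwP 2
end

section
/- Let v₀, v₁, v₂ be non-collinear points in the Euclidean plane ℝ² with circumradius R_T, circumcenter c, and orthocenter H. For P ∈ ℝ², the following are equivalent: (1) for each k ∈ {0,1,2} there exists wₖ ∈ ℝ² with dist(wₖ, vᵢ) = R_T for both indices i ≠ k and dist(wₖ, P) = R_T; (2) either dist(P, c) = R_T (P lies on the circumcircle) or P = H. -/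
open EuclideanGeometry Affine Affine.Simplex Finset

section JohnsonAux

lemma fin3_cover : ∀ (k i₁ i₂ i : Fin 3), i₁ ≠ i₂ → i₁ ≠ k → i₂ ≠ k → i ≠ k →
    i = i₁ ∨ i = i₂ := by decide

lemma fin3_cover' : ∀ (k i₁ i₂ i : Fin 3), i₁ ≠ i₂ → i₁ ≠ k → i₂ ≠ k →
    i = k ∨ i = i₁ ∨ i = i₂ := by decide

lemma aux_sub (v : Fin 3 → EuclideanSpace ℝ (Fin 2)) (c : EuclideanSpace ℝ (Fin 2)) :
    ∀ k i₁ i₂ : Fin 3, i₁ ≠ i₂ → i₁ ≠ k → i₂ ≠ k →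
      (v 0 + v 1 + v 2 - c) - v k = v i₁ + v i₂ - c := by
  intro k i₁ i₂ h12 hk1 hk2
  fin_cases k <;> fin_cases i₁ <;> fin_cases i₂ <;> simp_all <;> abel

lemma aux_span_top (v : Fin 3 → EuclideanSpace ℝ (Fin 2)) (hv : AffineIndependent ℝ v) :
    affineSpan ℝ (Set.range v) = ⊤ := by
  rw [hv.affineSpan_eq_top_iff_card_eq_finrank_add_one]
  simp

lemma aux_refl (v : Fin 3 → EuclideanSpace ℝ (Fin 2)) (hv : AffineIndependent ℝ v)
    {i₁ i₂ : Fin 3} (h : i₁ ≠ i₂) :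
    reflection (affineSpan ℝ ((⟨v, hv⟩ : Triangle ℝ (EuclideanSpace ℝ (Fin 2))).points '' {i₁, i₂}))
      (⟨v, hv⟩ : Triangle ℝ (EuclideanSpace ℝ (Fin 2))).circumcenter
      = v i₁ + v i₂ - (⟨v, hv⟩ : Triangle ℝ (EuclideanSpace ℝ (Fin 2))).circumcenter := by
  rw [Simplex.reflection_circumcenter_eq_affineCombination_of_pointsWithCircumcenter _ h,
    Finset.affineCombination_eq_linear_combination _ _ _
      (Simplex.sum_reflectionCircumcenterWeightsWithCircumcenter h),
    Simplex.sum_pointsWithCircumcenter]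
  simp only [Simplex.pointsWithCircumcenter_point, Simplex.pointsWithCircumcenter_eq_circumcenter,
    Simplex.reflectionCircumcenterWeightsWithCircumcenter]
  fin_cases i₁ <;> fin_cases i₂ <;> simp_all [Fin.sum_univ_three] <;> abel

/-- A point at circumdistance from two vertices is the circumcenter or its reflection
in the line of those vertices. -/
lemma aux_key (v : Fin 3 → EuclideanSpace ℝ (Fin 2)) (hv : AffineIndependent ℝ v)
    {k i₁ i₂ : Fin 3} (h12 : i₁ ≠ i₂) (hk1 : i₁ ≠ k) (hk2 : i₂ ≠ k)
    (w : EuclideanSpace ℝ (Fin 2))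
    (hw1 : dist w (v i₁) = (⟨v, hv⟩ : Triangle ℝ (EuclideanSpace ℝ (Fin 2))).circumradius)
    (hw2 : dist w (v i₂) = (⟨v, hv⟩ : Triangle ℝ (EuclideanSpace ℝ (Fin 2))).circumradius) :
    w = (⟨v, hv⟩ : Triangle ℝ (EuclideanSpace ℝ (Fin 2))).circumcenter ∨
      w = v i₁ + v i₂ - (⟨v, hv⟩ : Triangle ℝ (EuclideanSpace ℝ (Fin 2))).circumcenter := by
  set t : Triangle ℝ (EuclideanSpace ℝ (Fin 2)) := ⟨v, hv⟩ with ht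
  have hc2 : ({i₁, i₂} : Finset (Fin 3)).card = 2 := by
    rw [Finset.card_insert_of_notMem (by simp [h12]), Finset.card_singleton]
  set f := t.face hc2 with hf
  have hrange : Set.range f.points = v '' {i₁, i₂} := by
    rw [hf, Simplex.range_face_points]
    simp [ht]
  have hmemface : ∀ i : Fin 2, f.points i = v i₁ ∨ f.points i = v i₂ := by
    intro i
    have : f.points i ∈ Set.range f.points := Set.mem_range_self _
    rw [hrange] at this
    rcases this with ⟨j, hj, hje⟩
    rcases hj with rfl | rfl
    · exact Or.inl hje.symm
    · exact Or.inr hje.symm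
  have h₁ : ∀ i, dist (f.points i) w = t.circumradius := by
    intro i
    rcases hmemface i with h | h <;> rw [h, dist_comm] <;> assumption
  have h₂ : ∀ i, dist (f.points i) t.circumcenter = t.circumradius := by
    intro i
    rcases hmemface i with h | h <;> rw [h]
    · exact t.dist_circumcenter_eq_circumradius i₁
    · exact t.dist_circumcenter_eq_circumradius i₂
  have hspan : affineSpan ℝ (insert (v k) (Set.range f.points)) = ⊤ := by
    rw [eq_top_iff, ← aux_span_top v hv]
    apply affineSpan_mono
    rintro x ⟨i, rfl⟩
    rcases fin3_cover' k i₁ i₂ i h12 hk1 hk2 with rfl | rfl | rfl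
    · exact Set.mem_insert _ _
    · exact Set.mem_insert_of_mem _ (hrange ▸ Set.mem_image_of_mem v (by simp))
    · exact Set.mem_insert_of_mem _ (hrange ▸ Set.mem_image_of_mem v (by simp))
  have hmem : ∀ x : EuclideanSpace ℝ (Fin 2),
      x ∈ affineSpan ℝ (insert (v k) (Set.range f.points)) := by
    intro x; rw [hspan]; exact AffineSubspace.mem_top _ _ _
  rcases EuclideanGeometry.eq_or_eq_reflection_of_dist_eq (hmem w) (hmem t.circumcenter) h₁ h₂ with
    h | h
  · exact Or.inl h
  · right
    rw [h]
    have hsub : affineSpan ℝ (Set.range f.points) = affineSpan ℝ (t.points '' {i₁, i₂}) := by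
      rw [hrange]
    rw [EuclideanGeometry.eq_reflection_of_eq_subspace hsub]
    exact aux_refl v hv h12

end JohnsonAux



/-- Reformulation of Johnson's theorem: for a nondegenerate plane triangle with
circumcenter `c`, circumradius `R_T` and orthocenter `H`, a point `P` lies on circles
of radius `R_T` through each of the three pairs of vertices iff `P` lies on the
circumcircle or `P = H`. -/
theorem johnson_double_circles_iff
    (v : Fin 3 → EuclideanSpace ℝ (Fin 2))
    (hv : AffineIndependent ℝ v)
    (P : EuclideanSpace ℝ (Fin 2)) :
    (∀ k : Fin 3, ∃ w : EuclideanSpace ℝ (Fin 2),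
        (∀ i, i ≠ k →
          dist w (v i) = (⟨v, hv⟩ : Affine.Triangle ℝ (EuclideanSpace ℝ (Fin 2))).circumradius) ∧
        dist w P = (⟨v, hv⟩ : Affine.Triangle ℝ (EuclideanSpace ℝ (Fin 2))).circumradius) ↔
      (dist P (⟨v, hv⟩ : Affine.Triangle ℝ (EuclideanSpace ℝ (Fin 2))).circumcenter =
          (⟨v, hv⟩ : Affine.Triangle ℝ (EuclideanSpace ℝ (Fin 2))).circumradius ∨
        P = Affine.Triangle.orthocenter (⟨v, hv⟩ : Affine.Triangle ℝ (EuclideanSpace ℝ (Fin 2)))) := by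
  set t : Triangle ℝ (EuclideanSpace ℝ (Fin 2)) := ⟨v, hv⟩ with ht
  constructor
  · intro hw
    by_cases hP : dist P t.circumcenter = t.circumradius
    · exact Or.inl hP
    right
    have key : ∀ k i₁ i₂ : Fin 3, i₁ ≠ i₂ → i₁ ≠ k → i₂ ≠ k →
        dist (v i₁ + v i₂ - t.circumcenter) P = t.circumradius := by
      intro k i₁ i₂ h12 hk1 hk2
      obtain ⟨w, hwv, hwP⟩ := hw k
      rcases aux_key v hv h12 hk1 hk2 w (hwv i₁ hk1) (hwv i₂ hk2) with rfl | rfl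
      · exact absurd (by rw [dist_comm]; exact hwP) hP
      · exact hwP
    have hv' : AffineIndependent ℝ
        (fun k => (v 0 + v 1 + v 2 - t.circumcenter) - v k) := by
      have he : (fun k => (v 0 + v 1 + v 2 - t.circumcenter) - v k)
          = (AffineEquiv.constVSub ℝ (v 0 + v 1 + v 2 - t.circumcenter)) ∘ v := by
        funext k; rfl
      rw [he, AffineEquiv.affineIndependent_iff]
      exact hv
    set t' : Triangle ℝ (EuclideanSpace ℝ (Fin 2)) :=
      ⟨fun k => (v 0 + v 1 + v 2 - t.circumcenter) - v k, hv'⟩ with ht'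
    have hpts : ∀ k i₁ i₂ : Fin 3, i₁ ≠ i₂ → i₁ ≠ k → i₂ ≠ k →
        t'.points k = v i₁ + v i₂ - t.circumcenter := fun k i₁ i₂ h12 hk1 hk2 =>
      aux_sub v t.circumcenter k i₁ i₂ h12 hk1 hk2
    have hch : ∀ k : Fin 3, ∃ i₁ i₂ : Fin 3, i₁ ≠ i₂ ∧ i₁ ≠ k ∧ i₂ ≠ k := by decide
    have hP' : ∀ k, dist (t'.points k) P = t.circumradius := by
      intro k
      obtain ⟨i₁, i₂, h12, hk1, hk2⟩ := hch k
      rw [hpts k i₁ i₂ h12 hk1 hk2]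
      exact key k i₁ i₂ h12 hk1 hk2
    have hHk : ∀ (k i₁ i₂ : Fin 3), i₁ ≠ i₂ → i₁ ≠ k → i₂ ≠ k →
        dist (t'.points k) t.orthocenter = t.circumradius := by
      intro k i₁ i₂ h12 hk1 hk2
      rw [hpts k i₁ i₂ h12 hk1 hk2, ← aux_refl v hv h12, dist_comm]
      exact Triangle.dist_orthocenter_reflection_circumcenter t h12
    have hH' : ∀ k, dist (t'.points k) t.orthocenter = t.circumradius := by
      intro k
      obtain ⟨i₁, i₂, h12, hk1, hk2⟩ := hch k
      exact hHk k i₁ i₂ h12 hk1 hk2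
    have hmem' : ∀ x : EuclideanSpace ℝ (Fin 2), x ∈ affineSpan ℝ (Set.range t'.points) := by
      intro x; rw [aux_span_top _ hv']; exact AffineSubspace.mem_top _ _ _
    have e₁ : P = t'.circumcenter := t'.eq_circumcenter_of_dist_eq (hmem' P) hP'
    have e₂ : t.orthocenter = t'.circumcenter :=
      t'.eq_circumcenter_of_dist_eq (hmem' t.orthocenter) hH'
    rw [e₁, e₂]
  · rintro (hP | rfl) <;> intro k
    · refine ⟨t.circumcenter, fun i _ => ?_, by rw [dist_comm]; exact hP⟩
      rw [dist_comm]; exact t.dist_circumcenter_eq_circumradius i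
    · have witness : ∀ i₁ i₂ : Fin 3, i₁ ≠ i₂ → i₁ ≠ k → i₂ ≠ k →
          ∃ w : EuclideanSpace ℝ (Fin 2),
            (∀ i, i ≠ k → dist w (v i) = t.circumradius) ∧
            dist w t.orthocenter = t.circumradius := by
        intro i₁ i₂ h12 hk1 hk2
        refine ⟨reflection (affineSpan ℝ (t.points '' {i₁, i₂})) t.circumcenter, ?_, ?_⟩
        · intro i hi
          have hii : i = i₁ ∨ i = i₂ := fin3_cover k i₁ i₂ i h12 hk1 hk2 hi
          have hvmem : v i ∈ affineSpan ℝ (t.points '' {i₁, i₂}) := by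
            apply subset_affineSpan
            rcases hii with rfl | rfl <;> exact Set.mem_image_of_mem _ (by simp)
          rw [dist_comm, dist_reflection_eq_of_mem _ hvmem]
          exact t.dist_circumcenter_eq_circumradius i
        · rw [dist_comm]
          exact Triangle.dist_orthocenter_reflection_circumcenter t h12
      have hch : ∀ k : Fin 3, ∃ i₁ i₂ : Fin 3, i₁ ≠ i₂ ∧ i₁ ≠ k ∧ i₂ ≠ k := by decide
      obtain ⟨i₁, i₂, h12, hk1, hk2⟩ := hch k
      exact witness i₁ i₂ h12 hk1 hk2
end

section
/- Let A, B, C, X, Y, Z, ρ be real numbers satisfying the four equations: (E0) −2A²X − 2ABC + 2ABX + 2ABY + 2ACX + 2ACZ − 2AX² + 2AXY + 2AXZ − 2AYZ − 2B²Y + 2BCY + 2BCZ + 2BXY − 2BXZ − 2BY² + 2BYZ − 2C²Z − 2CXY + 2CXZ + 2CYZ − 2CZ² = 0; (E1) ρ(2(AY + AZ + YZ) − A² − Y² − Z²) − AYZ = 0; (E2) ρ(2(BX + BZ + XZ) − X² − B² − Z²) − BXZ = 0; (E3) ρ(2(CX + CY + XY) − X² − Y² − C²) − CXY = 0. Set θ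 = 2(AB + AC + BC) − (A² + B² + C²). Then ρ = 0 or θ = 0 or θρ = ABC. -/
/-- Elimination lemma for the planar Johnson polynomial system: any real solution
`(X, Y, Z, ρ)` of the four Cayley–Menger equations satisfies `ρ = 0` or `θ = 0` or
`θρ = ABC`, where `θ = 2(AB + AC + BC) − (A² + B² + C²)`. -/
theorem planar_system_radius
    (A B C X Y Z ρ : ℝ)
    (hE0 : -2*A^2*X - 2*A*B*C + 2*A*B*X + 2*A*B*Y + 2*A*C*X + 2*A*C*Z - 2*A*X^2
        + 2*A*X*Y + 2*A*X*Z - 2*A*Y*Z - 2*B^2*Y + 2*B*C*Y + 2*B*C*Z + 2*B*X*Y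
        - 2*B*X*Z - 2*B*Y^2 + 2*B*Y*Z - 2*C^2*Z - 2*C*X*Y + 2*C*X*Z + 2*C*Y*Z
        - 2*C*Z^2 = 0)
    (hE1 : ρ * (2*(A*Y + A*Z + Y*Z) - A^2 - Y^2 - Z^2) - A*Y*Z = 0)
    (hE2 : ρ * (2*(B*X + B*Z + X*Z) - X^2 - B^2 - Z^2) - B*X*Z = 0)
    (hE3 : ρ * (2*(C*X + C*Y + X*Y) - X^2 - Y^2 - C^2) - C*X*Y = 0) :
    ρ = 0 ∨ 2*(A*B + A*C + B*C) - (A^2 + B^2 + C^2) = 0 ∨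
      (2*(A*B + A*C + B*C) - (A^2 + B^2 + C^2)) * ρ = A * B * C := by
  have key : ρ * ((2*(A*B + A*C + B*C) - (A^2 + B^2 + C^2)) * ρ - A*B*C)^2 = 0 := by
    linear_combination
      (8*Z*ρ^3 - 26*Z^2*ρ^2 + (21/2)*Z^3*ρ + 8*Y*ρ^3 - 86*Y*Z*ρ^2 + 25*Y*Z^2*ρ - 4*Y^2*ρ^2 + (5/2)*Y^2*Z*ρ + 8*X*ρ^3 - 86*X*Z*ρ^2 + 2*X*Z^2*ρ - 42*X*Y*ρ^2 + 59*X*Y*Z*ρ - (47/4)*X*Y*Z^2 + (5/2)*X*Y^2*ρ - (5/4)*X*Y^2*Z - 4*X^2*ρ^2 + (29/2)*X^2*Z*ρ + (7/2)*X^2*Y*ρ - (7/4)*X^2*Y*Z - 8*C*ρ^3 + 55*C*Z*ρ^2 - (47/4)*C*Z^2*ρ + 3*C*Y*ρ^2 - (5/4)*C*Y*Z*ρ + 3*C*X*ρ^2 - (7/4)*C*X*Z*ρ - 8*B*ρ^3 + 25*B*Z*ρ^2 - 22*B*Z^2*ρ + 33*B*Y*ρ^2 - (47/4)*B*Y*Z*ρ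 - (5/4)*B*Y^2*ρ + 3*B*X*ρ^2 - 22*B*X*Z*ρ + 11*B*X*Z^2 - (7/4)*B*X*Y*ρ - (1/2)*B*C*Z*ρ - (1/2)*B*C*Y*ρ + 11*B^2*Z*ρ - 8*A*ρ^3 + 25*A*Z*ρ^2 + A*Z^2*ρ + 3*A*Y*ρ^2 + A*Y*Z*ρ - (1/2)*A*Y*Z^2 + 33*A*X*ρ^2 - (47/4)*A*X*Z*ρ - (5/4)*A*X*Y*ρ - (7/4)*A*X^2*ρ - (1/2)*A*C*Z*ρ - 22*A*B*ρ^2 - (1/2)*A*B*C*ρ - (1/2)*A^2*Z*ρ) * hE0 +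
      (5*Z^2*ρ^2 - 25*Z^3*ρ + 6*Y*Z*ρ^2 - 2*Y*Z^2*ρ + 5*Y^2*ρ^2 - 2*Y^2*Z*ρ - 3*Y^3*ρ - 16*X*Z*ρ^2 + 93*X*Z^2*ρ - 16*X*Y*ρ^2 - 54*X*Y*Z*ρ + (47/2)*X*Y*Z^2 + 5*X*Y^2*ρ + (5/2)*X*Y^2*Z + 16*X^2*ρ^2 - 51*X^2*Z*ρ - (47/2)*X^2*Z^2 + 59*X^2*Y*ρ - (45/2)*X^2*Y*Z - (5/2)*X^2*Y^2 - 20*X^3*ρ + 20*X^3*Z - X^3*Y + (7/2)*X^4 - 8*C*Z*ρ^2 + 6*C*Z^2*ρ + C*Z^3 - 8*C*Y*ρ^2 + 2*C*Y*Z*ρ - C*Y*Z^2 + 6*C*Y^2*ρ - 16*C*X*ρ^2 + 94*C*X*Z*ρ - 2*C*X*Z^2 + 20*C*X*Y*ρ - 3*C*X*Y^2 + 22*C*X^2*ρ - (45/2)*C*X^2*Z - (9/2)*C*X^2*Y - (7/2)*C*X^3 + 2*C^2*ρ^2 + C^2*Z^2 - 3*C^2*Y*ρ - 3*C^2*X*ρ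 - C^2*X*Z - 8*B*Z*ρ^2 + 50*B*Z^2*ρ - 8*B*Y*ρ^2 + 2*B*Y*Z*ρ - B*Y*Z^2 + 6*B*Y^2*ρ + B*Y^2*Z - 16*B*X*ρ^2 + 20*B*X*Z*ρ - 24*B*X*Z^2 - 38*B*X*Y*ρ - B*X*Y*Z + 22*B*X^2*ρ + (35/2)*B*X^2*Z - (5/2)*B*X^2*Y - (7/2)*B*X^3 + 12*B*C*ρ^2 - 10*B*C*Z*ρ - B*C*Z^2 - 10*B*C*Y*ρ - B*C*Y*Z - 22*B*C*X*ρ - (39/2)*B*C*X*Z + (5/2)*B*C*X*Y + (9/2)*B*C*X^2 + 4*B*C^2*ρ - B*C^2*X + 2*B^2*ρ^2 - 25*B^2*Z*ρ + B^2*Y*Z - 3*B^2*X*ρ + 4*B^2*C*ρ - B^2*C*X - 2*A*Z*ρ^2 + 22*A*Z^2*ρ - 2*A*Y*ρ^2 + A*Y*Z*ρ + A*Y*Z^2 + 16*A*X*ρ^2 - 94*A*X*Z*ρ - A*X*Z^2 - 6*A*X*Y*ρ - A*X*Y*Z - 44*A*X^2*ρ + (49/2)*A*X^2*Z + (5/2)*A*X^2*Y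 + (7/2)*A*X^3 + 4*A*C*ρ^2 - A*C*Z^2 + 4*A*B*ρ^2 - 44*A*B*Z*ρ - A*B*Y*Z + 21*A*B*X*Z - 2*A*B*C*ρ + A*B*C*Z + A*B*C*X + 22*A*B^2*ρ - A^2*ρ^2 + A^2*X*Z) * hE1 +
      ( - 5*Z^2*ρ^2 + 25*Z^3*ρ + 4*Y*Z*ρ^2 - 48*Y*Z^2*ρ - 2*Y^2*ρ^2 + 81*Y^2*Z*ρ - (47/2)*Y^2*Z^2 - 58*Y^3*ρ + 21*Y^3*Z + (5/2)*Y^4 + 6*X*Z*ρ^2 - 43*X*Z^2*ρ + 28*X*Y*Z*ρ + (47/2)*X*Y*Z^2 + 15*X*Y^2*ρ - (49/2)*X*Y^2*Z + X*Y^3 - 3*X^2*ρ^2 - 2*X^2*Z*ρ + 2*X^2*Y*ρ + (7/2)*X^2*Y*Z - (7/2)*X^2*Y^2 - 8*C*Z*ρ^2 + 46*C*Z^2*ρ - 22*C*Z^3 + 14*C*Y*Z*ρ + 21*C*Y*Z^2 + 56*C*Y^2*ρ - (47/2)*C*Y^2*Z - (3/2)*C*Y^3 + 8*C*X*ρ^2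 + 2*C*X*Z*ρ + 22*C*X*Z^2 - 24*C*X*Y*Z - (3/2)*C*X*Y^2 - 6*C^2*ρ^2 - 22*C^2*Z^2 - C^2*Y*Z - C^2*Y^2 - 2*B*Z*ρ^2 + 16*B*Y*ρ^2 - 50*B*Y*Z*ρ + 22*B*Y*Z^2 - 66*B*Y^2*ρ + (3/2)*B*Y^2*Z + (5/2)*B*Y^3 - 2*B*X*ρ^2 + B*X*Z*ρ - 22*B*X*Z^2 - 6*B*X*Y*ρ + 22*B*X*Y*Z + (7/2)*B*X*Y^2 + 4*B*C*ρ^2 + 22*B*C*Z^2 + 23*B*C*Y*Z + B*C*Y^2 - B^2*ρ^2 - 22*B^2*Y*Z + 12*A*Z*ρ^2 - 72*A*Z^2*ρ + 4*A*Y*ρ^2 + 36*A*Y*Z*ρ + 3*A*Y*Z^2 + 82*A*Y^2*ρ - (47/2)*A*Y^2*Z - (5/2)*A*Y^3 - 8*A*X*ρ^2 + 84*A*X*Z*ρ + 22*A*X*Z^2 + 44*A*X*Y*ρ - 19*A*X*Y*Z - (7/2)*A*X*Y^2 + 6*A*X^2*ρ - 22*A*X^2*Z + 12*A*C*ρ^2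 - 90*A*C*Z*ρ + 22*A*C*Z^2 - 102*A*C*Y*ρ + (41/2)*A*C*Y*Z + (5/2)*A*C*Y^2 - 10*A*C*X*ρ + 22*A*C*X*Z + (3/2)*A*C*X*Y + 4*A*C^2*ρ + 4*A*B*ρ^2 + 44*A*B*Y*ρ + 22*A*B*Y*Z + 22*A*B*X*Z - 2*A*B*C*ρ - 22*A*B*C*Z + A*B*C*Y - 8*A^2*ρ^2 + 69*A^2*Z*ρ - 22*A^2*Y*Z - 41*A^2*X*ρ - 22*A^2*X*Z + 44*A^2*C*ρ - A^2*C*Y - 22*A^3*ρ) * hE2 +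
      (4*Z^2*ρ^2 - 58*Z^3*ρ + (47/2)*Z^4 + 4*Y*Z*ρ^2 + 59*Y*Z^2*ρ - 21*Y*Z^3 - 5*Y^2*ρ^2 - 4*Y^2*Z*ρ - (5/2)*Y^2*Z^2 + 3*Y^3*ρ - 12*X*Z*ρ^2 + 59*X*Z^2*ρ - 20*X*Z^3 + 6*X*Y*ρ^2 - 60*X*Y*Z*ρ + (35/2)*X*Y*Z^2 + X*Y^2*ρ + (5/2)*X*Y^2*Z + 3*X^2*ρ^2 + 2*X^2*Z*ρ - (7/2)*X^2*Z^2 - 2*X^2*Y*ρ + (7/2)*X^2*Y*Z + 16*C*Z*ρ^2 - 110*C*Z^2*ρ + (47/2)*C*Z^3 - 2*C*Y*ρ^2 - 6*C*Y*Z*ρ + (5/2)*C*Y*Z^2 - 2*C*X*ρ^2 - 6*C*X*Z*ρ + (7/2)*C*X*Z^2 + C*X*Y*ρ - C^2*ρ^2 - 12*B*Z*ρ^2 + 56*B*Z^2*ρ - (45/2)*B*Z^3 - 8*B*Y*ρ^2 + 58*B*Y*Z*ρ - (5/2)*B*Y*Z^2 + 2*B*Y^2*ρ - B*Y^2*Z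 - 4*B*X*ρ^2 + 6*B*X*Z*ρ - (3/2)*B*X*Z^2 + 2*B*X*Y*ρ - 2*B*X*Y*Z + 4*B*C*ρ^2 + B*C*Z^2 + B*C*Y*Z - B^2*Z^2 - B^2*Y*Z + 4*A*Z*ρ^2 + 56*A*Z^2*ρ - (45/2)*A*Z^3 + 12*A*Y*ρ^2 - 8*A*Y*Z*ρ - (3/2)*A*Y*Z^2 - 6*A*Y^2*ρ + 3*A*Y^2*Z - 8*A*X*ρ^2 + 52*A*X*Z*ρ - (9/2)*A*X*Z^2 - 4*A*X*Y*ρ + 2*A*X*Y*Z + 2*A*X^2*ρ + 4*A*C*ρ^2 + A*C*Z^2 + 12*A*B*ρ^2 - 50*A*B*Z*ρ + (45/2)*A*B*Z^2 - 2*A*B*Y*ρ - (5/2)*A*B*Y*Z - 2*A*B*X*ρ - (5/2)*A*B*X*Z - 2*A*B*C*ρ + A*B*C*Z - 8*A^2*ρ^2 - A^2*Z^2 + 3*A^2*Y*ρ + 3*A^2*X*ρ) * hE3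
  rcases mul_eq_zero.mp key with h | h
  · exact Or.inl h
  · right; right
    have := pow_eq_zero_iff (n := 2) (by norm_num) |>.mp h
    linarith [this]
end

section
/- Let A, B, C be real numbers with θ = 2(AB + AC + BC) − (A² + B² + C²) ≠ 0, and set ρ = ABC/θ, X = A(B + C − A)²/θ, Y = B(A + C − B)²/θ, Z = C(A + B − C)²/θ. Then (X, Y, Z, ρ) satisfies the four equations: (E0) −2A²X − 2ABC + 2ABX + 2ABY + 2ACX + 2ACZ − 2AX² + 2AXY + 2AXZ − 2AYZ − 2B²Y + 2BCY + 2BCZ + 2BXY − 2BXZ − 2BY² + 2BYZ − 2C²Z − 2CXY + 2CXZ + 2CYZ − 2CZ² = 0; (E1) ρ(2(AY + AZ + YZ) − A² − Y² − Z²) − AYZ = 0; (E2) ρ(2(BX + BZ + XZ) − X² − B² − Z²) − BXZ = 0; (E3) ρ(2(CX + CY + XY) − X² − Y² − C²) − CXY = 0. -/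
set_option maxHeartbeats 1000000

lemma planar_aux0 (A B C t X Y Z : ℝ) (ht : t ≠ 0)
    (heq : t = 2*(A*B + A*C + B*C) - (A^2 + B^2 + C^2))
    (hx : X * t = A * (B + C - A) ^ 2) (hy : Y * t = B * (A + C - B) ^ 2) (hz : Z * t = C * (A + B - C) ^ 2) :
    -2*A^2*X - 2*A*B*C + 2*A*B*X + 2*A*B*Y + 2*A*C*X + 2*A*C*Z - 2*A*X^2
        + 2*A*X*Y + 2*A*X*Z - 2*A*Y*Z - 2*B^2*Y + 2*B*C*Y + 2*B*C*Z + 2*B*X*Y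
        - 2*B*X*Z - 2*B*Y^2 + 2*B*Y*Z - 2*C^2*Z - 2*C*X*Y + 2*C*X*Z + 2*C*Y*Z
        - 2*C*Z^2 = 0 := by
  have h2 : t^2 ≠ 0 := pow_ne_zero 2 ht
  apply mul_left_cancel₀ h2
  rw [mul_zero]
  have key : t^2 * (-2*A^2*X - 2*A*B*C + 2*A*B*X + 2*A*B*Y + 2*A*C*X + 2*A*C*Z - 2*A*X^2
        + 2*A*X*Y + 2*A*X*Z - 2*A*Y*Z - 2*B^2*Y + 2*B*C*Y + 2*B*C*Z + 2*B*X*Y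
        - 2*B*X*Z - 2*B*Y^2 + 2*B*Y*Z - 2*C^2*Z - 2*C*X*Y + 2*C*X*Z + 2*C*Y*Z
        - 2*C*Z^2) = -2*A^2*(X*t)*t - 2*A*B*C*t^2 + 2*A*B*(X*t)*t + 2*A*B*(Y*t)*t + 2*A*C*(X*t)*t + 2*A*C*(Z*t)*t - 2*A*(X*t)^2 + 2*A*(X*t)*(Y*t) + 2*A*(X*t)*(Z*t) - 2*A*(Y*t)*(Z*t) - 2*B^2*(Y*t)*t + 2*B*C*(Y*t)*t + 2*B*C*(Z*t)*t + 2*B*(X*t)*(Y*t) - 2*B*(X*t)*(Z*t) - 2*B*(Y*t)^2 + 2*B*(Y*t)*(Z*t) - 2*C^2*(Z*t)*t - 2*C*(X*t)*(Y*t) + 2*C*(X*t)*(Z*t) + 2*C*(Y*t)*(Z*t) - 2*C*(Z*t)^2 := by ring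
  rw [key, hx, hy, hz]
  subst heq
  ring

lemma planar_aux1 (A B C t R Y Z : ℝ) (ht : t ≠ 0)
    (heq : t = 2*(A*B + A*C + B*C) - (A^2 + B^2 + C^2))
    (hr : R * t = A * B * C) (hy : Y * t = B * (A + C - B) ^ 2) (hz : Z * t = C * (A + B - C) ^ 2) :
    R * (2*(A*Y + A*Z + Y*Z) - A^2 - Y^2 - Z^2) - A*Y*Z = 0 := by
  have h3 : t^3 ≠ 0 := pow_ne_zero 3 ht
  apply mul_left_cancel₀ h3
  rw [mul_zero]
  have key : t^3 * (R * (2*(A*Y + A*Z + Y*Z) - A^2 - Y^2 - Z^2) - A*Y*Z) = (R*t)*(2*(A*(Y*t)*t + A*(Z*t)*t + (Y*t)*(Z*t)) - A^2*t^2 - (Y*t)^2 - (Z*t)^2) - A*(Y*t)*(Z*t)*t := by ring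
  rw [key, hr, hy, hz]
  subst heq
  ring

lemma planar_aux2 (A B C t R X Z : ℝ) (ht : t ≠ 0)
    (heq : t = 2*(A*B + A*C + B*C) - (A^2 + B^2 + C^2))
    (hr : R * t = A * B * C) (hx : X * t = A * (B + C - A) ^ 2) (hz : Z * t = C * (A + B - C) ^ 2) :
    R * (2*(B*X + B*Z + X*Z) - X^2 - B^2 - Z^2) - B*X*Z = 0 := by
  have h3 : t^3 ≠ 0 := pow_ne_zero 3 ht
  apply mul_left_cancel₀ h3
  rw [mul_zero]
  have key : t^3 * (R * (2*(B*X + B*Z + X*Z) - X^2 - B^2 - Z^2) - B*X*Z) = (R*t)*(2*(B*(X*t)*t + B*(Z*t)*t + (X*t)*(Z*t)) - (X*t)^2 - B^2*t^2 - (Z*t)^2) - B*(X*t)*(Z*t)*t := by ring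
  rw [key, hr, hx, hz]
  subst heq
  ring

lemma planar_aux3 (A B C t R X Y : ℝ) (ht : t ≠ 0)
    (heq : t = 2*(A*B + A*C + B*C) - (A^2 + B^2 + C^2))
    (hr : R * t = A * B * C) (hx : X * t = A * (B + C - A) ^ 2) (hy : Y * t = B * (A + C - B) ^ 2) :
    R * (2*(C*X + C*Y + X*Y) - X^2 - Y^2 - C^2) - C*X*Y = 0 := by
  have h3 : t^3 ≠ 0 := pow_ne_zero 3 ht
  apply mul_left_cancel₀ h3
  rw [mul_zero]
  have key : t^3 * (R * (2*(C*X + C*Y + X*Y) - X^2 - Y^2 - C^2) - C*X*Y) = (R*t)*(2*(C*(X*t)*t + C*(Y*t)*t + (X*t)*(Y*t)) - (X*t)^2 - (Y*t)^2 - C^2*t^2) - C*(X*t)*(Y*t)*t := by ring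
  rw [key, hr, hx, hy]
  subst heq
  ring

/-- The orthocenter solution of the planar Johnson polynomial system: for
`θ = 2(AB + AC + BC) − (A² + B² + C²) ≠ 0`, the values `ρ = ABC/θ`,
`X = A(B + C − A)²/θ`, `Y = B(A + C − B)²/θ`, `Z = C(A + B − C)²/θ` satisfy the four
Cayley–Menger equations. -/
theorem planar_system_orthocenter_solution
    (A B C : ℝ)
    (hθ : 2*(A*B + A*C + B*C) - (A^2 + B^2 + C^2) ≠ 0) :
    let θ := 2*(A*B + A*C + B*C) - (A^2 + B^2 + C^2)
    let ρ := A * B * C / θ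
    let X := A * (B + C - A)^2 / θ
    let Y := B * (A + C - B)^2 / θ
    let Z := C * (A + B - C)^2 / θ
    (-2*A^2*X - 2*A*B*C + 2*A*B*X + 2*A*B*Y + 2*A*C*X + 2*A*C*Z - 2*A*X^2
        + 2*A*X*Y + 2*A*X*Z - 2*A*Y*Z - 2*B^2*Y + 2*B*C*Y + 2*B*C*Z + 2*B*X*Y
        - 2*B*X*Z - 2*B*Y^2 + 2*B*Y*Z - 2*C^2*Z - 2*C*X*Y + 2*C*X*Z + 2*C*Y*Z
        - 2*C*Z^2 = 0) ∧
      ρ * (2*(A*Y + A*Z + Y*Z) - A^2 - Y^2 - Z^2) - A*Y*Z = 0 ∧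
      ρ * (2*(B*X + B*Z + X*Z) - X^2 - B^2 - Z^2) - B*X*Z = 0 ∧
      ρ * (2*(C*X + C*Y + X*Y) - X^2 - Y^2 - C^2) - C*X*Y = 0 := by
  intro θ ρ X Y Z
  have hθ' : θ ≠ 0 := hθ
  have hr : ρ * θ = A * B * C := div_mul_cancel₀ _ hθ'
  have hx : X * θ = A * (B + C - A) ^ 2 := div_mul_cancel₀ _ hθ'
  have hy : Y * θ = B * (A + C - B) ^ 2 := div_mul_cancel₀ _ hθ'
  have hz : Z * θ = C * (A + B - C) ^ 2 := div_mul_cancel₀ _ hθ'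
  exact ⟨planar_aux0 A B C θ X Y Z hθ' rfl hx hy hz,
    planar_aux1 A B C θ ρ Y Z hθ' rfl hr hy hz,
    planar_aux2 A B C θ ρ X Z hθ' rfl hr hx hz,
    planar_aux3 A B C θ ρ X Y hθ' rfl hr hx hy⟩
end

section
/- Let v₀, v₁, v₂ be non-collinear points in the Euclidean plane ℝ², set A = ‖v₁ − v₂‖², B = ‖v₀ − v₂‖², C = ‖v₀ − v₁‖², and θ = 2(AB + AC + BC) − (A² + B² + C²), and let H be the orthocenter of the triangle with vertices v₀, v₁, v₂. Then ‖H − v₀‖² = A(B + C − A)²/θ, ‖H − v₁‖² = B(A + C − B)²/θ, and ‖H − v₂‖² = C(A + B − C)²/θ. -/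
/-! By Sylvester's relation `H - O = ∑ᵢ (vᵢ - O)` for the circumcenter `O`, the vector `H - v₀`
is the sum of the two circumradius vectors `v₁ - O` and `v₂ - O`, so the parallelogram law gives
`‖H - v₀‖² = 4R² - A`. The laws of cosines and sines give `θ = 4BC sin² α = A B C / R²`, where `α`
is the angle at `v₀`; substituting `R² = ABC / θ` yields the formulas. -/

open EuclideanGeometry Finset

variable {V P : Type*} [NormedAddCommGroup V] [InnerProductSpace ℝ V] [MetricSpace P]
  [NormedAddTorsor V P]

theorem EuclideanGeometry.four_mul_dist_sq_mul_dist_sq_mul_sin_angle_sq (p₁ p₂ p₃ : P) :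
    4 * dist p₁ p₂ ^ 2 * dist p₃ p₂ ^ 2 * Real.sin (∠ p₁ p₂ p₃) ^ 2 =
      4 * dist p₁ p₂ ^ 2 * dist p₃ p₂ ^ 2 -
        (dist p₁ p₂ ^ 2 + dist p₃ p₂ ^ 2 - dist p₁ p₃ ^ 2) ^ 2 := by
  rw [Real.sin_sq]
  linear_combination (dist p₁ p₃ ^ 2 - dist p₁ p₂ ^ 2 - dist p₃ p₂ ^ 2 -
    2 * dist p₁ p₂ * dist p₃ p₂ * Real.cos (∠ p₁ p₂ p₃)) * law_cos p₁ p₂ p₃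

namespace Affine.Triangle

variable (t : Triangle ℝ P) {i₁ i₂ i₃ : Fin 3}

theorem dist_orthocenter_sq (h₁₂ : i₁ ≠ i₂) (h₁₃ : i₁ ≠ i₃) (h₂₃ : i₂ ≠ i₃) :
    dist t.orthocenter (t.points i₁) ^ 2 =
      4 * t.circumradius ^ 2 - dist (t.points i₂) (t.points i₃) ^ 2 := by
  have huniv : (univ : Finset (Fin 3)) = {i₁, i₂, i₃} := by
    revert i₁ i₂ i₃; decide
  set O := t.circumcenter
  have hH : t.orthocenter -ᵥ t.points i₁ = (t.points i₂ -ᵥ O) + (t.points i₃ -ᵥ O) := by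
    rw [← vsub_sub_vsub_cancel_right _ _ O, orthocenter_vsub_circumcenter_eq_sum_vsub, huniv,
      sum_insert (by simp [h₁₂, h₁₃]), sum_pair h₂₃]
    abel
  have hR (i : Fin 3) : ‖t.points i -ᵥ O‖ = t.circumradius := by
    rw [← dist_eq_norm_vsub V]; exact t.dist_circumcenter_eq_circumradius i
  have hpar := parallelogram_law_with_norm ℝ (t.points i₂ -ᵥ O) (t.points i₃ -ᵥ O)
  rw [hR, hR, vsub_sub_vsub_cancel_right, ← hH] at hpar
  rw [dist_eq_norm_vsub V, dist_eq_norm_vsub V]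
  linear_combination hpar

theorem mul_circumradius_sq_eq_dist_sq_mul_dist_sq_mul_dist_sq
    (h₁₂ : i₁ ≠ i₂) (h₁₃ : i₁ ≠ i₃) (h₂₃ : i₂ ≠ i₃) :
    (4 * dist (t.points i₁) (t.points i₂) ^ 2 * dist (t.points i₃) (t.points i₂) ^ 2 -
      (dist (t.points i₁) (t.points i₂) ^ 2 + dist (t.points i₃) (t.points i₂) ^ 2 -
        dist (t.points i₁) (t.points i₃) ^ 2) ^ 2) * t.circumradius ^ 2 =
      dist (t.points i₁) (t.points i₂) ^ 2 * dist (t.points i₃) (t.points i₂) ^ 2 *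
        dist (t.points i₁) (t.points i₃) ^ 2 := by
  have hsine := t.dist_div_sin_angle_eq_two_mul_circumradius h₁₂ h₁₃ h₂₃
  have hsin : Real.sin (∠ (t.points i₁) (t.points i₂) (t.points i₃)) ≠ 0 := by
    intro h
    rw [h, div_zero] at hsine
    linarith [t.circumradius_pos]
  rw [div_eq_iff hsin] at hsine
  rw [← four_mul_dist_sq_mul_dist_sq_mul_sin_angle_sq, hsine]
  ring

end Affine.Triangle

/-- Distance coordinates of the orthocenter: for a nondegenerate plane triangle with
squared side lengths `A = ‖v₁ − v₂‖²`, `B = ‖v₀ − v₂‖²`, `C = ‖v₀ − v₁‖²` and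
`θ = 2(AB + AC + BC) − (A² + B² + C²)`, the orthocenter `H` satisfies
`‖H − v₀‖² = A(B + C − A)²/θ`, `‖H − v₁‖² = B(A + C − B)²/θ` and
`‖H − v₂‖² = C(A + B − C)²/θ`. -/
theorem orthocenter_distance_coordinates
    (v : Fin 3 → EuclideanSpace ℝ (Fin 2))
    (hv : AffineIndependent ℝ v)
    (A B C θ : ℝ)
    (hA : A = dist (v 1) (v 2) ^ 2)
    (hB : B = dist (v 0) (v 2) ^ 2)
    (hC : C = dist (v 0) (v 1) ^ 2)
    (hθ : θ = 2 * (A * B + A * C + B * C) - (A ^ 2 + B ^ 2 + C ^ 2)) :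
    let H := Affine.Triangle.orthocenter
      (⟨v, hv⟩ : Affine.Triangle ℝ (EuclideanSpace ℝ (Fin 2)))
    dist H (v 0) ^ 2 = A * (B + C - A) ^ 2 / θ ∧
      dist H (v 1) ^ 2 = B * (A + C - B) ^ 2 / θ ∧
      dist H (v 2) ^ 2 = C * (A + B - C) ^ 2 / θ := by
  set t : Affine.Triangle ℝ (EuclideanSpace ℝ (Fin 2)) := ⟨v, hv⟩
  have hR : θ * t.circumradius ^ 2 = A * B * C := by
    have h := t.mul_circumradius_sq_eq_dist_sq_mul_dist_sq_mul_dist_sq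
      (i₁ := 1) (i₂ := 0) (i₃ := 2) (by decide) (by decide) (by decide)
    simp only [t, dist_comm (v 1) (v 0), dist_comm (v 2) (v 0), ← hA, ← hB, ← hC] at h
    rw [hθ]
    linear_combination h
  have hABC : A * B * C ≠ 0 := by
    have hd {i j : Fin 3} (h : i ≠ j) : dist (v i) (v j) ^ 2 ≠ 0 :=
      pow_ne_zero 2 (dist_ne_zero.mpr (hv.injective.ne h))
    rw [hA, hB, hC]
    exact mul_ne_zero (mul_ne_zero (hd (by decide)) (hd (by decide))) (hd (by decide))
  have hθ0 : θ ≠ 0 := left_ne_zero_of_mul (hR ▸ hABC)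
  refine ⟨?_, ?_, ?_⟩ <;> rw [eq_div_iff hθ0]
  · rw [t.dist_orthocenter_sq (i₁ := 0) (i₂ := 1) (i₃ := 2) (by decide) (by decide) (by decide)]
    simp only [t, ← hA]
    linear_combination 4 * hR - A * hθ
  · rw [t.dist_orthocenter_sq (i₁ := 1) (i₂ := 0) (i₃ := 2) (by decide) (by decide) (by decide)]
    simp only [t, ← hB]
    linear_combination 4 * hR - B * hθ
  · rw [t.dist_orthocenter_sq (i₁ := 2) (i₂ := 0) (i₃ := 1) (by decide) (by decide) (by decide)]
    simp only [t, ← hC]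
    linear_combination 4 * hR - C * hθ
end

section
/- Let v₀, v₁, v₂, v₃ ∈ ℝ³ be the vertices of a regular tetrahedron with edge length 1 (i.e. ‖vᵢ − vⱼ‖ = 1 for all i ≠ j). Suppose r > 0 and there exist points P, w₀, w₁, w₂, w₃ ∈ ℝ³ such that for each j ∈ {0,1,2,3}, ‖wⱼ − vᵢ‖ = r for all i ≠ j and ‖wⱼ − P‖ = r (i.e. for each j, the sphere of center wⱼ and radius r contains the three vertices other than vⱼ and also contains P). Then r² ∈ {3/8, 5/8, 27/32}. -/
open RealInnerProductSpace

private lemma tetra_aux2 (a al be q : ℝ)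
    (e1 : 8*q = 16*a*al + 2*a + 3)
    (e2 : 8*q = 16*(-(2/3) - a)*be + 2*(-(2/3) - a) + 3)
    (hC : al + be = 0) (hD : q = 4*(al^2 + be^2)) : 3*a^2 + 2*a - 2 = 0 := by
  have hbe : be = -al := by linarith
  subst hbe
  have hal : al = (3*a+1)/8 := by linarith
  subst hal
  linear_combination e1 - 8*hD

private lemma tetra_aux13 (a b al be q : ℝ) (hab : a + b = -(2/3)) (ha : a ≠ 0)
    (e1 : 8*q = 16*a*al + 2*a + 3)
    (e2 : 8*q = 16*b*be + 2*b + 3)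
    (hC : al + 3*be = 0) (hD : q = 2*(al^2 + 3*be^2)) : False := by
  have hb : b = -(2/3) - a := by linarith
  subst hb
  have hal : al = -3*be := by linarith
  subst hal
  have h1 : 8*be*(3*a-1) = 3*a+1 := by linear_combination (3/4)*e1 - (3/4)*e2
  have h2 : 192*be^2 = -48*a*be + 2*a + 3 := by linear_combination e1 - 8*hD
  have h4 : a * (9*a^2 + 3*a + 7) = 0 := by
    linear_combination ((3*a-1)^2/4) * h2
      - ((3*(8*be*(3*a-1) - (3*a+1)) + 6*(3*a+1) + 6*a*(3*a-1))/4) * h1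
  rcases mul_eq_zero.mp h4 with h | h
  · exact ha h
  · nlinarith [sq_nonneg (6*a+1)]

set_option maxHeartbeats 2000000 in
/-- For the regular tetrahedron with edge 1 in `ℝ³`, if four spheres of common radius
`r > 0` centered at `w 0, …, w 3` are such that the `j`-th sphere contains the three
vertices other than `v j` and they all pass through a common point `P`, then
`r² ∈ {3/8, 5/8, 27/32}`. -/
theorem regular_tetrahedron_common_point_radius
    (v : Fin 4 → EuclideanSpace ℝ (Fin 3))
    (hv : ∀ i j, i ≠ j → dist (v i) (v j) = 1)
    (r : ℝ) (hr : 0 < r)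
    (P : EuclideanSpace ℝ (Fin 3)) (w : Fin 4 → EuclideanSpace ℝ (Fin 3))
    (hw : ∀ j i, i ≠ j → dist (w j) (v i) = r)
    (hwP : ∀ j, dist (w j) P = r) :
    r ^ 2 ∈ ({3/8, 5/8, 27/32} : Set ℝ) := by
  classical
  have expand : ∀ x y : EuclideanSpace ℝ (Fin 3),
      ⟪x - y, x - y⟫ = ⟪x, x⟫ - 2*⟪x, y⟫ + ⟪y, y⟫ := by
    intro x y
    simp only [inner_sub_left, inner_sub_right]
    rw [real_inner_comm x y]; ring
  set G : EuclideanSpace ℝ (Fin 3) := ((4:ℝ)⁻¹) • (v 0 + v 1 + v 2 + v 3) with hGdef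
  set V : Fin 4 → EuclideanSpace ℝ (Fin 3) := fun i => v i - G with hVdef
  have hVsum : V 0 + V 1 + V 2 + V 3 = 0 := by
    simp only [hVdef, hGdef]; module
  have hVd : ∀ i j : Fin 4, i ≠ j → ⟪V i - V j, V i - V j⟫ = 1 := by
    intro i j hij
    have h1 : V i - V j = v i - v j := by simp only [hVdef]; abel
    rw [h1, real_inner_self_eq_norm_sq, ← dist_eq_norm, hv i j hij]; norm_num
  -- Gram matrix facts
  have hp : ∀ i j : Fin 4, i ≠ j → ⟪V i, V i⟫ - 2*⟪V i, V j⟫ + ⟪V j, V j⟫ = 1 := by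
    intro i j h; rw [← expand]; exact hVd i j h
  have hs4 : ∀ i : Fin 4, ⟪V i, V 0⟫ + ⟪V i, V 1⟫ + ⟪V i, V 2⟫ + ⟪V i, V 3⟫ = 0 := by
    intro i
    have h : ⟪V i, V 0 + V 1 + V 2 + V 3⟫ = 0 := by rw [hVsum, inner_zero_right]
    simpa [inner_add_right] using h
  have c01 := hp 0 1 (by decide); have c02 := hp 0 2 (by decide)
  have c03 := hp 0 3 (by decide); have c12 := hp 1 2 (by decide)
  have c13 := hp 1 3 (by decide); have c23 := hp 2 3 (by decide)
  have s0 := hs4 0; have s1 := hs4 1; have s2 := hs4 2; have s3 := hs4 3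
  have m01 : ⟪V 1, V 0⟫ = ⟪V 0, V 1⟫ := real_inner_comm _ _
  have m02 : ⟪V 2, V 0⟫ = ⟪V 0, V 2⟫ := real_inner_comm _ _
  have m03 : ⟪V 3, V 0⟫ = ⟪V 0, V 3⟫ := real_inner_comm _ _
  have m12 : ⟪V 2, V 1⟫ = ⟪V 1, V 2⟫ := real_inner_comm _ _
  have m13 : ⟪V 3, V 1⟫ = ⟪V 1, V 3⟫ := real_inner_comm _ _
  have m23 : ⟪V 3, V 2⟫ = ⟪V 2, V 3⟫ := real_inner_comm _ _
  have n0 : ⟪V 0, V 0⟫ = 3/8 := by linarith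
  have n1 : ⟪V 1, V 1⟫ = 3/8 := by linarith
  have n2 : ⟪V 2, V 2⟫ = 3/8 := by linarith
  have n3 : ⟪V 3, V 3⟫ = 3/8 := by linarith
  have e01 : ⟪V 0, V 1⟫ = -(1/8) := by linarith
  have e02 : ⟪V 0, V 2⟫ = -(1/8) := by linarith
  have e03 : ⟪V 0, V 3⟫ = -(1/8) := by linarith
  have e12 : ⟪V 1, V 2⟫ = -(1/8) := by linarith
  have e13 : ⟪V 1, V 3⟫ = -(1/8) := by linarith
  have e23 : ⟪V 2, V 3⟫ = -(1/8) := by linarith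
  have hnn : ∀ i : Fin 4, ⟪V i, V i⟫ = 3/8 := by
    intro i; fin_cases i
    · exact n0
    · exact n1
    · exact n2
    · exact n3
  have hee : ∀ i j : Fin 4, i ≠ j → ⟪V i, V j⟫ = -(1/8) := by
    intro i j hij
    have h := hp i j hij
    rw [hnn i, hnn j] at h
    linarith
  -- the three recentered vertices V 0, V 1, V 2 span everything
  have hli : LinearIndependent ℝ ![V 0, V 1, V 2] := by
    rw [Fintype.linearIndependent_iff]
    intro g hg
    rw [Fin.sum_univ_three] at hg
    simp only [Matrix.cons_val_zero, Matrix.cons_val_one, Matrix.head_cons,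
      Matrix.cons_val_two, Matrix.tail_cons] at hg
    have k0 : ⟪g 0 • V 0 + g 1 • V 1 + g 2 • V 2, V 0⟫ = 0 := by rw [hg, inner_zero_left]
    have k1 : ⟪g 0 • V 0 + g 1 • V 1 + g 2 • V 2, V 1⟫ = 0 := by rw [hg, inner_zero_left]
    have k2 : ⟪g 0 • V 0 + g 1 • V 1 + g 2 • V 2, V 2⟫ = 0 := by rw [hg, inner_zero_left]
    simp only [inner_add_left, real_inner_smul_left] at k0 k1 k2
    rw [hnn 0, hee 1 0 (by decide), hee 2 0 (by decide)] at k0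
    rw [hee 0 1 (by decide), hnn 1, hee 2 1 (by decide)] at k1
    rw [hee 0 2 (by decide), hee 1 2 (by decide), hnn 2] at k2
    have hg0 : g 0 = 0 := by linarith
    have hg1 : g 1 = 0 := by linarith
    have hg2 : g 2 = 0 := by linarith
    intro i; fin_cases i
    · exact hg0
    · exact hg1
    · exact hg2
  have htop : Submodule.span ℝ (Set.range ![V 0, V 1, V 2]) = ⊤ :=
    hli.span_eq_top_of_card_eq_finrank (by simp)
  have hXzero : ∀ X : EuclideanSpace ℝ (Fin 3),
      ⟪X, V 0⟫ = 0 → ⟪X, V 1⟫ = 0 → ⟪X, V 2⟫ = 0 → X = 0 := by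
    intro X h0 h1 h2
    have hmem : ∀ y, y ∈ Submodule.span ℝ (Set.range ![V 0, V 1, V 2]) → ⟪X, y⟫ = 0 := by
      intro y hy
      induction hy using Submodule.span_induction with
      | mem y hy => rcases hy with ⟨i, rfl⟩; fin_cases i <;> simpa
      | zero => simp
      | add a b _ _ ha hb => rw [inner_add_right, ha, hb]; ring
      | smul c a _ ha => rw [real_inner_smul_right, ha]; ring
    have hXX : ⟪X, X⟫ = 0 := hmem X (htop ▸ Submodule.mem_top)
    exact inner_self_eq_zero.mp hXX
  -- recentered sphere centers and common point
  set W : Fin 4 → EuclideanSpace ℝ (Fin 3) := fun j => w j - G with hWdef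
  set Q : EuclideanSpace ℝ (Fin 3) := P - G with hQdef
  have hwv : ∀ j i : Fin 4, i ≠ j → ⟪W j - V i, W j - V i⟫ = r^2 := by
    intro j i hij
    have h1 : W j - V i = w j - v i := by simp only [hWdef, hVdef]; abel
    rw [h1, real_inner_self_eq_norm_sq, ← dist_eq_norm, hw j i hij]
  have hwq : ∀ j : Fin 4, ⟪W j - Q, W j - Q⟫ = r^2 := by
    intro j
    have h1 : W j - Q = w j - P := by simp only [hWdef, hQdef]; abel
    rw [h1, real_inner_self_eq_norm_sq, ← dist_eq_norm, hwP j]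
  obtain ⟨t, ht⟩ : ∃ t : Fin 4 → ℝ, ∀ j, t j = (⟪W j, W j⟫ + 3/8 - r^2)/2 :=
    ⟨_, fun _ => rfl⟩
  obtain ⟨s, hst⟩ : ∃ s : Fin 4 → ℝ, ∀ j, s j = -8 * t j := ⟨_, fun _ => rfl⟩
  obtain ⟨u, hu⟩ : ∃ u : Fin 4 → ℝ, ∀ j, u j = ⟪V j, Q⟫ := ⟨_, fun _ => rfl⟩
  have hWV : ∀ j i : Fin 4, i ≠ j → ⟪W j, V i⟫ = t j := by
    intro j i hij
    have h1 := hwv j i hij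
    rw [expand, hnn i] at h1
    rw [ht j]; linarith
  have hWVj : ∀ j : Fin 4, ⟪W j, V j⟫ = -3 * t j := by
    intro j
    have h0 : ∑ i, ⟪W j, V i⟫ = 0 := by
      rw [← inner_sum]
      rw [show (∑ i, V i) = V 0 + V 1 + V 2 + V 3 from Fin.sum_univ_four V]
      rw [hVsum, inner_zero_right]
    have h1 : ∑ i ∈ Finset.univ.erase j, ⟪W j, V i⟫ = ∑ _i ∈ Finset.univ.erase j, t j :=
      Finset.sum_congr rfl (fun i hi => hWV j i (Finset.ne_of_mem_erase hi))
    rw [Finset.sum_const, Finset.card_erase_of_mem (Finset.mem_univ j)] at h1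
    have h2 : ⟪W j, V j⟫ + ∑ i ∈ Finset.univ.erase j, ⟪W j, V i⟫ = ∑ i, ⟪W j, V i⟫ :=
      Finset.add_sum_erase _ (fun i => ⟪W j, V i⟫) (Finset.mem_univ j)
    rw [h0, h1] at h2
    simp only [Finset.card_univ, Fintype.card_fin] at h2
    have h4 : ((4:ℕ) - 1) • t j = 3 * t j := by norm_num
    rw [h4] at h2
    linarith
  have hWs : ∀ j, W j = s j • V j := by
    intro j
    have key : ∀ i, ⟪W j - s j • V j, V i⟫ = 0 := by
      intro i
      rw [inner_sub_left, real_inner_smul_left]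
      by_cases hij : i = j
      · subst hij; rw [hWVj i, hnn i, hst i]; ring
      · rw [hWV j i hij, hee j i (fun h => hij h.symm), hst j]; ring
    have h := hXzero _ (key 0) (key 1) (key 2)
    rw [sub_eq_zero] at h
    exact h
  have hWW : ∀ j, ⟪W j, W j⟫ = (s j)^2 * (3/8) := by
    intro j
    rw [hWs j, real_inner_smul_left, real_inner_smul_right, hnn j]; ring
  have hA : ∀ j, 3 * s j^2 + 2 * s j + 3 = 8 * r^2 := by
    intro j
    have h1 := ht j
    have h2 := hst j
    rw [hWW j] at h1
    linarith
  have hE : ∀ j, 8 * ⟪Q, Q⟫ = 16 * s j * u j + 2 * s j + 3 := by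
    intro j
    have h1 := hwq j
    rw [expand, hWW j] at h1
    have h2 : ⟪W j, Q⟫ = s j * u j := by rw [hWs j, real_inner_smul_left, ← hu j]
    rw [h2] at h1
    linear_combination 8*h1 - hA j
  have hC : u 0 + u 1 + u 2 + u 3 = 0 := by
    have h : ⟪V 0 + V 1 + V 2 + V 3, Q⟫ = 0 := by rw [hVsum, inner_zero_left]
    simp only [inner_add_left] at h
    rw [hu 0, hu 1, hu 2, hu 3]; linarith
  -- express Q in the spanning family to get the norm identity
  have hQmem : Q ∈ Submodule.span ℝ (Set.range ![V 0, V 1, V 2]) := by rw [htop]; trivial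
  obtain ⟨c, hc⟩ := (Submodule.mem_span_range_iff_exists_fun ℝ).mp hQmem
  rw [Fin.sum_univ_three] at hc
  simp only [Matrix.cons_val_zero, Matrix.cons_val_one, Matrix.head_cons,
    Matrix.cons_val_two, Matrix.tail_cons] at hc
  have hcu0 : u 0 = (3/8)*c 0 - (1/8)*c 1 - (1/8)*c 2 := by
    rw [hu 0, ← hc]
    simp only [inner_add_right, real_inner_smul_right]
    rw [hnn 0, hee 0 1 (by decide), hee 0 2 (by decide)]; ring
  have hcu1 : u 1 = -(1/8)*c 0 + (3/8)*c 1 - (1/8)*c 2 := by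
    rw [hu 1, ← hc]
    simp only [inner_add_right, real_inner_smul_right]
    rw [hee 1 0 (by decide), hnn 1, hee 1 2 (by decide)]; ring
  have hcu2 : u 2 = -(1/8)*c 0 - (1/8)*c 1 + (3/8)*c 2 := by
    rw [hu 2, ← hc]
    simp only [inner_add_right, real_inner_smul_right]
    rw [hee 2 0 (by decide), hee 2 1 (by decide), hnn 2]; ring
  have hcq : ⟪Q, Q⟫ = c 0 * u 0 + c 1 * u 1 + c 2 * u 2 := by
    nth_rw 1 [← hc]
    simp only [inner_add_left, real_inner_smul_left]
    rw [← hu 0, ← hu 1, ← hu 2]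
  have hu3 : u 3 = -(u 0 + u 1 + u 2) := by linarith
  have hD : ⟪Q, Q⟫ = 2*(u 0^2 + u 1^2 + u 2^2 + u 3^2) := by
    rw [hcq, hu3, hcu0, hcu1, hcu2]; ring
  -- final case analysis: pure algebra
  simp only [Set.mem_insert_iff, Set.mem_singleton_iff]
  by_cases hz : ∃ j, s j = 0
  · obtain ⟨j, hj⟩ := hz
    have h := hA j
    rw [hj] at h
    left; linarith
  · push_neg at hz
    have key : ∀ i, s i = s 0 ∨ s i = -(2/3) - s 0 := by
      intro i
      have h3 : (s 0 - s i) * (3*(s 0 + s i) + 2) = 0 := by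
        linear_combination hA 0 - hA i
      rcases mul_eq_zero.mp h3 with h | h
      · left; linarith
      · right; linarith
    have huu : ∀ i j : Fin 4, s i = s j → u i = u j := by
      intro i j hij
      have hi := hE i
      rw [hij] at hi
      have h3 : 16 * s j * (u i - u j) = 0 := by
        linear_combination hE j - hi
      rcases mul_eq_zero.mp h3 with h | h
      · exact absurd (by linarith : s j = 0) (hz j)
      · linarith
    rcases key 1 with h1 | h1 <;> rcases key 2 with h2 | h2 <;> rcases key 3 with h3 | h3
    · -- all four equal : r² = 27/32
      have e1 := huu 1 0 h1
      have e2 := huu 2 0 h2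
      have e3 := huu 3 0 h3
      have hu0 : u 0 = 0 := by linarith
      have hq0 : ⟪Q, Q⟫ = 0 := by rw [hD, e1, e2, e3, hu0]; ring
      have hs0 : s 0 = -(3/2) := by
        linear_combination (-(1:ℝ)/2) * hE 0 + 4*hq0 + (-8*s 0)*hu0
      have h6 := hA 0
      rw [hs0] at h6
      right; right; linarith
    · -- (a,a,a,b) : impossible
      exfalso
      have e1 := huu 1 0 h1
      have e2 := huu 2 0 h2
      refine tetra_aux13 (-(2/3) - s 0) (s 0) (u 3) (u 0) ⟪Q, Q⟫ (by ring) ?_ ?_ (hE 0) ?_ ?_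
      · rw [← h3]; exact hz 3
      · rw [← h3]; exact hE 3
      · linarith
      · linear_combination hD + 2*(u 1 + u 0)*e1 + 2*(u 2 + u 0)*e2
    · -- (a,a,b,a) : impossible
      exfalso
      have e1 := huu 1 0 h1
      have e3 := huu 3 0 h3
      refine tetra_aux13 (-(2/3) - s 0) (s 0) (u 2) (u 0) ⟪Q, Q⟫ (by ring) ?_ ?_ (hE 0) ?_ ?_
      · rw [← h2]; exact hz 2
      · rw [← h2]; exact hE 2
      · linarith
      · linear_combination hD + 2*(u 1 + u 0)*e1 + 2*(u 3 + u 0)*e3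
    · -- (a,a,b,b) : r² = 5/8
      have e1 := huu 1 0 h1
      have e23 : u 3 = u 2 := huu 3 2 (h3.trans h2.symm)
      have hfin : 3*(s 0)^2 + 2*(s 0) - 2 = 0 := by
        refine tetra_aux2 (s 0) (u 0) (u 2) ⟪Q, Q⟫ (hE 0) ?_ ?_ ?_
        · rw [← h2]; exact hE 2
        · linarith
        · linear_combination hD + 2*(u 1 + u 0)*e1 + 2*(u 3 + u 2)*e23
      right; left
      have h6 := hA 0
      linarith
    · -- (a,b,a,a) : impossible
      exfalso
      have e2 := huu 2 0 h2
      have e3 := huu 3 0 h3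
      refine tetra_aux13 (-(2/3) - s 0) (s 0) (u 1) (u 0) ⟪Q, Q⟫ (by ring) ?_ ?_ (hE 0) ?_ ?_
      · rw [← h1]; exact hz 1
      · rw [← h1]; exact hE 1
      · linarith
      · linear_combination hD + 2*(u 2 + u 0)*e2 + 2*(u 3 + u 0)*e3
    · -- (a,b,a,b) : r² = 5/8
      have e2 := huu 2 0 h2
      have e13 : u 3 = u 1 := huu 3 1 (h3.trans h1.symm)
      have hfin : 3*(s 0)^2 + 2*(s 0) - 2 = 0 := by
        refine tetra_aux2 (s 0) (u 0) (u 1) ⟪Q, Q⟫ (hE 0) ?_ ?_ ?_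
        · rw [← h1]; exact hE 1
        · linarith
        · linear_combination hD + 2*(u 2 + u 0)*e2 + 2*(u 3 + u 1)*e13
      right; left
      have h6 := hA 0
      linarith
    · -- (a,b,b,a) : r² = 5/8
      have e3 := huu 3 0 h3
      have e12 : u 2 = u 1 := huu 2 1 (h2.trans h1.symm)
      have hfin : 3*(s 0)^2 + 2*(s 0) - 2 = 0 := by
        refine tetra_aux2 (s 0) (u 0) (u 1) ⟪Q, Q⟫ (hE 0) ?_ ?_ ?_
        · rw [← h1]; exact hE 1
        · linarith
        · linear_combination hD + 2*(u 3 + u 0)*e3 + 2*(u 2 + u 1)*e12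
      right; left
      have h6 := hA 0
      linarith
    · -- (a,b,b,b) : impossible
      exfalso
      have e12 : u 2 = u 1 := huu 2 1 (h2.trans h1.symm)
      have e13 : u 3 = u 1 := huu 3 1 (h3.trans h1.symm)
      refine tetra_aux13 (s 0) (-(2/3) - s 0) (u 0) (u 1) ⟪Q, Q⟫ (by ring) (hz 0) (hE 0) ?_ ?_ ?_
      · rw [← h1]; exact hE 1
      · linarith
      · linear_combination hD + 2*(u 2 + u 1)*e12 + 2*(u 3 + u 1)*e13
end

section
/- Let v₀, v₁, v₂, v₃ ∈ ℝ³ be the vertices of a regular tetrahedron with edge length 1, and let O be its circumcenter (the unique point equidistant from the four vertices). Then there exist four pairwise distinct points w₀, w₁, w₂, w₃ ∈ ℝ³ such that for each j ∈ {0,1,2,3}, ‖wⱼ − vᵢ‖² = 27/32 for all i ≠ j and ‖wⱼ − O‖² = 27/32. In other words, four distinct spheres of radius √(27/32) = (3/2)·R_T, each containing exactly the three vertices other than one vertex, all pass through the circumcenter of the tetrahedron, where R_T = √(3/8) is the circumradius. -/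
open scoped RealInnerProductSpace

/-- For the regular tetrahedron with edge 1 in `ℝ³` with circumcenter `O` (the unique
point equidistant from the four vertices), there exist four pairwise distinct centers
`w 0, …, w 3` of spheres of squared radius `27/32` such that the `j`-th sphere contains
the three vertices other than `v j` as well as `O`. -/
theorem regular_tetrahedron_circumcenter_configuration
    (v : Fin 4 → EuclideanSpace ℝ (Fin 3))
    (hv : ∀ i j, i ≠ j → dist (v i) (v j) = 1)
    (O : EuclideanSpace ℝ (Fin 3))
    (hO : ∀ i j, dist O (v i) = dist O (v j)) :
    ∃ w : Fin 4 → EuclideanSpace ℝ (Fin 3),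
      Function.Injective w ∧
      (∀ j i, i ≠ j → dist (w j) (v i) ^ 2 = 27/32) ∧
      (∀ j, dist (w j) O ^ 2 = 27/32) := by
  obtain ⟨u, hudef⟩ : ∃ u : Fin 4 → EuclideanSpace ℝ (Fin 3),
      u = fun i => v i - O := ⟨_, rfl⟩
  obtain ⟨r, hrdef⟩ : ∃ r : ℝ, r = ‖u 0‖ ^ 2 := ⟨_, rfl⟩
  have hnorm : ∀ i, ‖u i‖ ^ 2 = r := by
    intro i
    have h := hO i 0
    rw [dist_eq_norm, dist_eq_norm, norm_sub_rev O (v i), norm_sub_rev O (v 0)] at h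
    rw [hrdef]
    simp only [hudef]
    rw [h]
  have hself : ∀ i, ⟪u i, u i⟫ = r := by
    intro i; rw [real_inner_self_eq_norm_sq]; exact hnorm i
  have hij : ∀ i j, i ≠ j → ⟪u i, u j⟫ = r - 1/2 := by
    intro i j hne
    have hd : ‖u i - u j‖ = 1 := by
      have huij : u i - u j = v i - v j := by simp only [hudef]; abel
      rw [huij, ← dist_eq_norm]; exact hv i j hne
    have h := norm_sub_sq_real (u i) (u j)
    rw [hd, hnorm i, hnorm j] at h
    linarith
  -- linear dependence forces r = 3/8
  have hdep : ¬ LinearIndependent ℝ u := by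
    intro h
    have := h.fintype_card_le_finrank
    simp [finrank_euclideanSpace] at this
  obtain ⟨g, hgsum, i₀, hgi₀⟩ := Fintype.not_linearIndependent_iff.mp hdep
  have key : ∀ j, g 0 * ⟪u 0, u j⟫ + g 1 * ⟪u 1, u j⟫ + g 2 * ⟪u 2, u j⟫
      + g 3 * ⟪u 3, u j⟫ = 0 := by
    intro j
    have h1 : ⟪∑ i, g i • u i, u j⟫ = 0 := by rw [hgsum]; simp
    rw [Fin.sum_univ_four, inner_add_left, inner_add_left, inner_add_left,
      real_inner_smul_left, real_inner_smul_left, real_inner_smul_left,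
      real_inner_smul_left] at h1
    linarith
  have E0 := key 0
  have E1 := key 1
  have E2 := key 2
  have E3 := key 3
  rw [hself 0, hij 1 0 (by decide), hij 2 0 (by decide), hij 3 0 (by decide)] at E0
  rw [hij 0 1 (by decide), hself 1, hij 2 1 (by decide), hij 3 1 (by decide)] at E1
  rw [hij 0 2 (by decide), hij 1 2 (by decide), hself 2, hij 3 2 (by decide)] at E2
  rw [hij 0 3 (by decide), hij 1 3 (by decide), hij 2 3 (by decide), hself 3] at E3
  have h01 : g 0 = g 1 := by linear_combination 2*E0 - 2*E1
  have h02 : g 0 = g 2 := by linear_combination 2*E0 - 2*E2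
  have h03 : g 0 = g 3 := by linear_combination 2*E0 - 2*E3
  have hg0 : g 0 ≠ 0 := by
    fin_cases i₀ <;> simp_all
  have hrval : r = 3/8 := by
    have h4 : g 0 * (4 * r - 3/2) = 0 := by
      linear_combination E0 + (r - 1/2) * h01 + (r - 1/2) * h02 + (r - 1/2) * h03
    rcases mul_eq_zero.mp h4 with h | h
    · exact absurd h hg0
    · linarith
  -- the centers
  refine ⟨fun j => O - (3/2 : ℝ) • u j, ?_, ?_, ?_⟩
  · intro j k hjk
    have huv : u j = u k := by
      have h1 : (3/2 : ℝ) • u j = (3/2 : ℝ) • u k := sub_right_injective hjk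
      exact smul_right_injective _ (by norm_num : (3/2 : ℝ) ≠ 0) h1
    by_contra hne
    have hdist := hv j k hne
    have hvv : v j = v k := by
      have h2 : v j - O = v k - O := by
        have := huv; simp only [hudef] at this; exact this
      exact sub_left_injective h2
    rw [hvv, dist_self] at hdist
    norm_num at hdist
  · intro j i hne
    have hx : (O - (3/2 : ℝ) • u j) - v i = (-((3/2 : ℝ) • u j)) - u i := by
      simp only [hudef]; abel
    rw [dist_eq_norm, hx, norm_sub_sq_real, norm_neg, norm_smul, Real.norm_eq_abs,
      mul_pow, sq_abs, hnorm j, hnorm i, inner_neg_left, real_inner_smul_left,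
      hij j i (Ne.symm hne), hrval]
    norm_num
  · intro j
    have hx : (O - (3/2 : ℝ) • u j) - O = -((3/2 : ℝ) • u j) := by abel
    rw [dist_eq_norm, hx, norm_neg, norm_smul, Real.norm_eq_abs, mul_pow, sq_abs,
      hnorm j, hrval]
    norm_num
end

section
/- For a real parameter η, let f(t) = 432(η − 3)t³ + 108η(η − 2)t² − 9η²(η + 1)t + η⁴, regarded as a polynomial in t, and let η̄ = 135/98 + (19/98)√57 (the positive root of 49η² − 135η − 12). Then: (1) for η ∈ (0, η̄), f has exactly one real root, and this root is strictly positive; (2) for η ∈ (η̄, 3), f has exactly three distinct real roots, all strictly positive; (3) for η = η̄, f has exactly one simple real root and one double real root, both strictly positive. -/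
lemma divided_diff (a b c d s t : ℝ) (hs : a*s^3+b*s^2+c*s+d = 0)
    (ht : a*t^3+b*t^2+c*t+d = 0) (hst : s ≠ t) :
    a*(s^2+s*t+t^2)+b*(s+t)+c = 0 := by
  have h0 : (s - t) * (a*(s^2+s*t+t^2)+b*(s+t)+c) = 0 := by linear_combination hs - ht
  exact (mul_eq_zero.1 h0).resolve_left (sub_ne_zero.2 hst)

lemma two_roots_nonneg_disc (a b c d s t : ℝ) (hs : a*s^3+b*s^2+c*s+d = 0)
    (ht : a*t^3+b*t^2+c*t+d = 0) (hst : s ≠ t) :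
    0 ≤ 18*a*b*c*d - 4*b^3*d + b^2*c^2 - 4*a*c^3 - 27*a^2*d^2 := by
  have E := divided_diff a b c d s t hs ht hst
  have key : 18*a*b*c*d - 4*b^3*d + b^2*c^2 - 4*a*c^3 - 27*a^2*d^2
      = ((s-t)*(2*a*s+a*t+b)*(2*a*t+a*s+b))^2 := by
    linear_combination (-4*b^3 + 18*a*b*c - 27*a^2*d + 27*a^2*c*s + 27*a^2*b*s^2 + 27*a^3*s^3) * hs
      + (b^2*c - b^3*t + 3*b^3*s - 4*a*c^2 + 4*a*b*c*t - 14*a*b*c*s - 5*a*b^2*t^2 + 9*a*b^2*s*t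
        - 5*a*b^2*s^2 + 4*a^2*c*t^2 + 4*a^2*c*s*t - 23*a^2*c*s^2 - 8*a^2*b*t^3 + 2*a^2*b*s*t^2
        + 29*a^2*b*s^2*t - 35*a^2*b*s^3 - 4*a^3*t^4 - 8*a^3*s*t^3 + 15*a^3*s^2*t^2
        + 19*a^3*s^3*t - 31*a^3*s^4) * E
  rw [key]; positivity

lemma four_roots (a b c d x y z s : ℝ)
    (hx : a*x^3+b*x^2+c*x+d = 0) (hy : a*y^3+b*y^2+c*y+d = 0)
    (hz : a*z^3+b*z^2+c*z+d = 0) (hs : a*s^3+b*s^2+c*s+d = 0)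
    (ha : a ≠ 0) (hxy : x ≠ y) (hyz : y ≠ z) (hxz : x ≠ z) :
    s = x ∨ s = y ∨ s = z := by
  by_contra h
  push_neg at h
  obtain ⟨hsx, hsy, hsz⟩ := h
  have Exy := divided_diff a b c d x y hx hy hxy
  have Exz := divided_diff a b c d x z hx hz hxz
  have Exs := divided_diff a b c d x s hx hs (fun h => hsx h.symm)
  have h1 : (y - z) * (a*(x+y+z)+b) = 0 := by linear_combination Exy - Exz
  have h2 : (y - s) * (a*(x+y+s)+b) = 0 := by linear_combination Exy - Exs
  rcases eq_or_ne y s with hys | hys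
  · -- then s = y, contradiction
    exact hsy hys.symm
  · have e1 := (mul_eq_zero.1 h1).resolve_left (sub_ne_zero.2 hyz)
    have e2 := (mul_eq_zero.1 h2).resolve_left (sub_ne_zero.2 (fun h => hys h))
    have : a * (z - s) = 0 := by linear_combination e1 - e2
    rcases mul_eq_zero.1 this with h' | h'
    · exact ha h'
    · exact hsz (sub_eq_zero.1 h').symm

set_option maxHeartbeats 1600000 in

open Polynomial in
/-- Real-root structure of the cubic
`f(t) = 432(η − 3)t³ + 108η(η − 2)t² − 9η²(η + 1)t + η⁴`, with
`η̄ = 135/98 + (19/98)√57`: for `η ∈ (0, η̄)` it has exactly one real root, which is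
positive; for `η ∈ (η̄, 3)` it has exactly three distinct real roots, all positive;
for `η = η̄` it has exactly one simple and one double real root, both positive. -/
theorem cubic_f_real_roots (η : ℝ) :
    let f : Polynomial ℝ :=
      C (432 * (η - 3)) * X ^ 3 + C (108 * η * (η - 2)) * X ^ 2 +
        C (-(9 * η ^ 2 * (η + 1))) * X + C (η ^ 4)
    let η' : ℝ := 135/98 + (19/98) * Real.sqrt 57
    ((0 < η ∧ η < η') →
      ∃ t, 0 < t ∧ f.IsRoot t ∧ ∀ s, f.IsRoot s → s = t) ∧
    ((η' < η ∧ η < 3) →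
      ∃ t₁ t₂ t₃, t₁ < t₂ ∧ t₂ < t₃ ∧ 0 < t₁ ∧ 0 < t₂ ∧ 0 < t₃ ∧
        f.IsRoot t₁ ∧ f.IsRoot t₂ ∧ f.IsRoot t₃ ∧
        ∀ s, f.IsRoot s → s = t₁ ∨ s = t₂ ∨ s = t₃) ∧
    (η = η' →
      ∃ a b, 0 < a ∧ 0 < b ∧ a ≠ b ∧
        Polynomial.rootMultiplicity a f = 1 ∧ Polynomial.rootMultiplicity b f = 2 ∧
        ∀ s, f.IsRoot s → s = a ∨ s = b) := by
  intro f η'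
  refine ⟨?_, ?_, ?_⟩
  · -- one real root, positive
    have hfe : ∀ x : ℝ, f.eval x
        = 432*(η-3)*x^3 + 108*η*(η-2)*x^2 + -(9*η^2*(η+1))*x + η^4 := by
      intro x; simp [f]
    have hroot : ∀ x : ℝ, f.IsRoot x ↔
        432*(η-3)*x^3 + 108*η*(η-2)*x^2 + -(9*η^2*(η+1))*x + η^4 = 0 := by
      intro x; rw [Polynomial.IsRoot, hfe]
    have h57 : Real.sqrt 57 ^ 2 = 57 := Real.sq_sqrt (by norm_num)
    have hnn : (0:ℝ) ≤ Real.sqrt 57 := Real.sqrt_nonneg 57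
    rintro ⟨h0, h1⟩
    have h1' : η < 135/98 + 19/98 * Real.sqrt 57 := h1
    have h755 : Real.sqrt 57 < 7.55 := by nlinarith
    have h285 : η < 2.85 := by nlinarith
    have hq : 49*η^2 - 135*η - 12 < 0 := by nlinarith [mul_pos h0 (sub_pos.2 h1')]
    -- existence via IVT on [0,3]
    have hf0 : 0 < f.eval 0 := by rw [hfe]; norm_num; positivity
    have hf3 : f.eval 3 < 0 := by
      rw [hfe]
      nlinarith [sq_nonneg η, sq_nonneg (η-2.85), pow_pos h0 3, pow_pos h0 4, sq_nonneg (η*(η-2.85))]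
    have hIVT := intermediate_value_Ioo' (by norm_num : (0:ℝ) ≤ 3)
      ((f.continuous).continuousOn (s := Set.Icc 0 3))
    have h0mem : (0:ℝ) ∈ Set.Ioo (f.eval 3) (f.eval 0) := ⟨hf3, hf0⟩
    obtain ⟨t, htmem, hteq⟩ := hIVT h0mem
    refine ⟨t, htmem.1, hteq, ?_⟩
    intro s hs
    by_contra hne
    have hd := two_roots_nonneg_disc (432*(η-3)) (108*η*(η-2)) (-(9*η^2*(η+1))) (η^4) s t
      (by linear_combination (hroot s).1 hs) (by linear_combination (hroot t).1 hteq) hne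
    have hdisc : 18*(432*(η-3))*(108*η*(η-2))*(-(9*η^2*(η+1)))*(η^4)
        - 4*(108*η*(η-2))^3*(η^4) + (108*η*(η-2))^2*(-(9*η^2*(η+1)))^2
        - 4*(432*(η-3))*(-(9*η^2*(η+1)))^3 - 27*(432*(η-3))^2*(η^4)^2
        = 314928*η^7*((3-η)*(49*η^2-135*η-12)) := by ring
    rw [hdisc] at hd
    have hneg : 314928*η^7*((3-η)*(49*η^2-135*η-12)) < 0 := by
      apply mul_neg_of_pos_of_neg (by positivity)
      exact mul_neg_of_pos_of_neg (by linarith) hq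
    linarith
  · -- three distinct real roots
    have hfe : ∀ x : ℝ, f.eval x
        = 432*(η-3)*x^3 + 108*η*(η-2)*x^2 + -(9*η^2*(η+1))*x + η^4 := by
      intro x; simp [f]
    clear_value f
    have h57 : Real.sqrt 57 ^ 2 = 57 := Real.sq_sqrt (by norm_num)
    have hnn : (0:ℝ) ≤ Real.sqrt 57 := Real.sqrt_nonneg 57
    rintro ⟨h1, h2⟩
    have h1' : 135/98 + 19/98 * Real.sqrt 57 < η := h1
    have hr74 : (7.4:ℝ) < Real.sqrt 57 := by nlinarith
    have hη28 : (2.8:ℝ) < η := by nlinarith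
    have hA : 0 < 98*η - 135 - 19*Real.sqrt 57 := by linarith
    have hB : 0 < 98*η - 135 + 19*Real.sqrt 57 := by linarith
    have hquad : 0 < 49*η^2 - 135*η - 12 := by nlinarith [mul_pos hA hB]
    have hsmall : 0 < 2*η^2 - 6*η + 1 := by nlinarith
    set s : ℝ := Real.sqrt (2*η^2 - 6*η + 1) with hs_def
    have hs_pos : 0 < s := Real.sqrt_pos.2 hsmall
    have hs2 : s^2 = 2*η^2 - 6*η + 1 := Real.sq_sqrt hsmall.le
    have hden : (0:ℝ) < 12*(3-η) := by linarith
    have hsη2 : s < η - 2 := by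
      nlinarith [mul_pos (show (0:ℝ) < 3-η by linarith) (show (0:ℝ) < η+1 by linarith)]
    set c1 : ℝ := η*(η-2-s)/(12*(3-η)) with hc1_def
    set c2 : ℝ := η*(η-2+s)/(12*(3-η)) with hc2_def
    set q3 : ℝ := η^2/(3-η) with hq3_def
    have e1 : c1*(12*(3-η)) = η*(η-2-s) := div_mul_cancel₀ _ hden.ne'
    have e2 : c2*(12*(3-η)) = η*(η-2+s) := div_mul_cancel₀ _ hden.ne'
    have e3 : q3*(3-η) = η^2 := div_mul_cancel₀ _ (by linarith : (3:ℝ)-η ≠ 0)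
    have hc1pos : 0 < c1 := div_pos (mul_pos (by linarith) (by linarith)) hden
    have hc1c2 : c1 < c2 := by
      rw [hc1_def, hc2_def, div_lt_div_iff_of_pos_right hden]
      nlinarith [mul_pos (show (0:ℝ) < η by linarith) hs_pos]
    have hc2q3 : c2 < q3 := by
      rw [hc2_def, hq3_def]
      rw [div_lt_div_iff₀ hden (by linarith : (0:ℝ) < 3-η)]
      nlinarith [hs2, hs_pos, sq_nonneg (s - 11*η - 2)]
    -- values at critical points
    have hval1 : f.eval c1 * (12*(3-η))^3
        = 432*η^3*(-9*η^4+75*η^3-207*η^2+187*η+6)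
          - s*(864*η^3*(3-η)*(2*η^2-6*η+1)) := by
      rw [hfe]
      linear_combination (432*(η-3)*((c1*(12*(3-η)))^2 + (c1*(12*(3-η)))*(η*(η-2-s)) + (η*(η-2-s))^2)
        + 1296*η*(η-2)*(3-η)*((c1*(12*(3-η))) + η*(η-2-s))
        - 1296*η^2*(η+1)*(3-η)^2) * e1 + (432*η^3*s*(3-η)) * hs2
    have hval2 : f.eval c2 * (12*(3-η))^3
        = 432*η^3*(-9*η^4+75*η^3-207*η^2+187*η+6)
          + s*(864*η^3*(3-η)*(2*η^2-6*η+1)) := by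
      rw [hfe]
      linear_combination (432*(η-3)*((c2*(12*(3-η)))^2 + (c2*(12*(3-η)))*(η*(η-2+s)) + (η*(η-2+s))^2)
        + 1296*η*(η-2)*(3-η)*((c2*(12*(3-η))) + η*(η-2+s))
        - 1296*η^2*(η+1)*(3-η)^2) * e2 + (-432*η^3*s*(3-η)) * hs2
    have hvalq3 : f.eval q3 * (3-η)^3 = η^4*((3-η)*(-314*η^2-240*η-18)) := by
      rw [hfe]
      linear_combination (432*(η-3)*((q3*(3-η))^2 + (q3*(3-η))*η^2 + η^4)
        + 108*η*(η-2)*(3-η)*((q3*(3-η)) + η^2)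
        - 9*η^2*(η+1)*(3-η)^2) * e3
    set U : ℝ := 432*η^3*(-9*η^4+75*η^3-207*η^2+187*η+6) with hU
    set V : ℝ := 864*η^3*(3-η)*(2*η^2-6*η+1) with hV
    have hVpos : 0 < V := by
      rw [hV]; exact mul_pos (mul_pos (by positivity) (by linarith)) hsmall
    clear_value U V s c1 c2 q3
    have hprod : (s*V - U)*(s*V + U) = 186624*η^7*(3-η)^5*(49*η^2-135*η-12) := by
      rw [hU, hV]
      linear_combination (864*η^3*(3-η)*(2*η^2-6*η+1))^2 * hs2
    have hR : 0 < 186624*η^7*(3-η)^5*(49*η^2-135*η-12) :=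
      mul_pos (mul_pos (by positivity) (pow_pos (by linarith) 5)) hquad
    have hsV : 0 < s*V := mul_pos hs_pos hVpos
    have h1n : 0 < s*V - U := by nlinarith [hprod, hR, hsV]
    have h2n : 0 < s*V + U := by nlinarith [hprod, hR, hsV]
    have hD3 : 0 < (12*(3-η))^3 := pow_pos hden 3
    have hDq : 0 < (3-η)^3 := pow_pos (by linarith) 3
    have h1'' : f.eval c1 * (12*(3-η))^3 < 0 := by rw [hval1]; linarith
    have h2'' : 0 < f.eval c2 * (12*(3-η))^3 := by rw [hval2]; linarith
    have hneg : η^4*((3-η)*(-314*η^2-240*η-18)) < 0 :=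
      mul_neg_of_pos_of_neg (by positivity)
        (mul_neg_of_pos_of_neg (by linarith) (by nlinarith))
    have h3'' : f.eval q3 * (3-η)^3 < 0 := by rw [hvalq3]; linarith
    clear hval1 hval2 hvalq3 hprod hR e1 e2 e3 hU hV hneg
    have hfc1 : f.eval c1 < 0 := by nlinarith [h1'', hD3]
    have hfc2 : 0 < f.eval c2 := by nlinarith [h2'', hD3]
    have hfq3 : f.eval q3 < 0 := by nlinarith [h3'', hDq]
    have hf0 : 0 < f.eval 0 := by
      rw [hfe]; norm_num; positivity
    have hcont : ContinuousOn (fun x : ℝ => f.eval x) (Set.Icc 0 c1) := f.continuous.continuousOn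
    obtain ⟨t1, ht1mem, ht1⟩ := intermediate_value_Ioo' hc1pos.le (f.continuous.continuousOn)
      (Set.mem_Ioo.2 ⟨hfc1, hf0⟩)
    obtain ⟨t2, ht2mem, ht2⟩ := intermediate_value_Ioo hc1c2.le (f.continuous.continuousOn)
      (Set.mem_Ioo.2 ⟨hfc1, hfc2⟩)
    obtain ⟨t3, ht3mem, ht3⟩ := intermediate_value_Ioo' hc2q3.le (f.continuous.continuousOn)
      (Set.mem_Ioo.2 ⟨hfq3, hfc2⟩)
    obtain ⟨ht10, ht1c⟩ := ht1mem
    obtain ⟨ht2a, ht2b⟩ := ht2mem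
    obtain ⟨ht3a, ht3b⟩ := ht3mem
    have ha : (432*(η-3) : ℝ) ≠ 0 := (show 432*(η-3) < 0 by linarith).ne
    refine ⟨t1, t2, t3, by linarith, by linarith, ht10, by linarith, by linarith,
      ht1, ht2, ht3, ?_⟩
    intro s0 hs0
    have hroot : ∀ x : ℝ, f.IsRoot x → 432*(η-3)*x^3 + 108*η*(η-2)*x^2 + (-(9*η^2*(η+1)))*x + η^4 = 0 := by
      intro x hx
      have := hfe x
      rw [hx] at this  -- hx : eval x f = 0? IsRoot
      linarith [this]
    exact four_roots (432*(η-3)) (108*η*(η-2)) (-(9*η^2*(η+1))) (η^4) t1 t2 t3 s0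
      (hroot t1 ht1) (hroot t2 ht2) (hroot t3 ht3) (hroot s0 hs0)
      ha (by linarith) (by linarith) (by linarith)
  · -- one simple and one double root
    have h57 : Real.sqrt 57 ^ 2 = 57 := Real.sq_sqrt (by norm_num)
    have hnn : (0:ℝ) ≤ Real.sqrt 57 := Real.sqrt_nonneg 57
    intro h
    have hη : η = 135/98 + 19/98 * Real.sqrt 57 := h
    set r : ℝ := Real.sqrt 57 with hr_def
    set A : ℝ := (1557+193*r)/9408 with hA_def
    set B : ℝ := (507+67*r)/588 with hB_def
    have hApos : 0 < A := by rw [hA_def]; positivity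
    have hBpos : 0 < B := by rw [hB_def]; positivity
    have hABlt : A < B := by rw [hA_def, hB_def]; linarith
    have hABne : A ≠ B := hABlt.ne
    have hr755 : r < 7.56 := by nlinarith
    have hKneg : 432*(η-3) < 0 := by rw [hη]; nlinarith
    have hKne : (432*(η-3) : ℝ) ≠ 0 := hKneg.ne
    have hco2 : 108*η*(η-2) = -((432*(η-3))*A) - (432*(η-3))*B - (432*(η-3))*B := by
      rw [hη, hA_def, hB_def]
      linear_combination (9747/392) * h57
    have hco1 : -(9*η^2*(η+1)) = (432*(η-3))*(B*B) + (432*(η-3))*(A*B) + (432*(η-3))*(A*B) := by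
      rw [hη, hA_def, hB_def]
      linear_combination (-458649/38416 - 59337/38416*r) * h57
    have hco0 : η^4 = -((432*(η-3))*(A*(B*B))) := by
      rw [hη, hA_def, hB_def]
      linear_combination (21832659/15059072 + 2793915/7529536*r + 357219/15059072*r^2) * h57
    have hf_eq : f = C (432*(η-3)) * (X - C A) * (X - C B)^2 := by
      rw [show f = C (432 * (η - 3)) * X ^ 3 + C (108 * η * (η - 2)) * X ^ 2 +
          C (-(9 * η ^ 2 * (η + 1))) * X + C (η ^ 4) from rfl]
      rw [hco2, hco1, hco0]
      simp only [map_mul, map_sub, map_neg, map_add]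
      ring
    have hXA : (X - C A : Polynomial ℝ) ≠ 0 := Polynomial.X_sub_C_ne_zero A
    have hXB : (X - C B : Polynomial ℝ) ≠ 0 := Polynomial.X_sub_C_ne_zero B
    have hCne : (C (432*(η-3)) : Polynomial ℝ) ≠ 0 := by
      exact Polynomial.C_ne_zero.mpr hKne
    have hne1 : (C (432*(η-3)) * (X - C A) : Polynomial ℝ) ≠ 0 := mul_ne_zero hCne hXA
    have hne2 : (C (432*(η-3)) * (X - C A) * (X - C B)^2 : Polynomial ℝ) ≠ 0 :=
      mul_ne_zero hne1 (pow_ne_zero 2 hXB)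
    have hnrA : ¬ ((X - C B : Polynomial ℝ)^2).IsRoot A := by
      simp [Polynomial.IsRoot, sub_eq_zero]
      exact hABne
    have hnrB : ¬ (X - C A : Polynomial ℝ).IsRoot B := by
      simp [Polynomial.IsRoot, sub_eq_zero]
      exact hABne.symm
    refine ⟨A, B, hApos, hBpos, hABne, ?_, ?_, ?_⟩
    · rw [hf_eq, Polynomial.rootMultiplicity_mul hne2, Polynomial.rootMultiplicity_mul hne1,
        Polynomial.rootMultiplicity_C, Polynomial.rootMultiplicity_X_sub_C_self,
        Polynomial.rootMultiplicity_eq_zero hnrA]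
    · rw [hf_eq, Polynomial.rootMultiplicity_mul hne2, Polynomial.rootMultiplicity_mul hne1,
        Polynomial.rootMultiplicity_C, Polynomial.rootMultiplicity_eq_zero hnrB,
        Polynomial.rootMultiplicity_X_sub_C_pow]
    · intro s hs
      rw [hf_eq] at hs
      have : (432*(η-3)) * ((s - A) * (s - B)^2) = 0 := by
        have hs' := hs
        simp only [Polynomial.IsRoot, Polynomial.eval_mul, Polynomial.eval_pow,
          Polynomial.eval_sub, Polynomial.eval_X, Polynomial.eval_C] at hs'
        linear_combination hs'
      rcases mul_eq_zero.1 this with h' | h'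
      · exact absurd h' hKne
      · rcases mul_eq_zero.1 h' with h'' | h''
        · exact Or.inl (sub_eq_zero.1 h'')
        · exact Or.inr (sub_eq_zero.1 (pow_eq_zero_iff (by norm_num) |>.1 h''))
end

section
/- For a real parameter η, let g(ρ) = 1024(η − 3)ρ³ + (−704η² + 1920η + 768)ρ² + η(196η² − 732η + 288)ρ + 27η², regarded as a polynomial in ρ, and let η̄ = 135/98 + (19/98)√57 (the positive root of 49η² − 135η − 12). Then: (1) for η ∈ (0, η̄) with η ≠ 12/5, g has exactly one real root, and this root is strictly positive; (2) for η ∈ (η̄, 3) and for η = 12/5, g has three real roots counted with multiplicity (with a double root exactly when η = 12/5 or η = 20/7), all strictly positive; (3) for η = η̄, g has exactly one simple real root and one double real root, both strictly positive. -/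
/-!
The discriminant of `g` is `196608 η³ (49η² − 135η − 12) (5η − 12)² (7η − 20)² (3 − η)`, so on
`0 < η < 3` it has the sign of `η − η̄`, except that it vanishes at `η = 12/5` and `η = 20/7`.
A real cubic with negative discriminant has only one real root, since two distinct real roots
force the third one to be real and the discriminant to be a square. A real cubic with
nonnegative discriminant splits over `ℝ`: a non-real root `w` comes with `w̄`, and then
`a² (w − w̄) (w − z) (w̄ − z)` is purely imaginary and nonzero, so its square, the discriminant,
is negative. For `η < η̄` the leading coefficient is negative while `g(0) = 27η² > 0`, which
gives a positive root; for `12/5 ≤ η < 3` the coefficients have signs `−, +, −, +`, which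
excludes roots `≤ 0`. At `η = 12/5`, `20/7` and `η̄`, `g` factors explicitly with a double root.
-/

open Polynomial ComplexConjugate Filter

theorem Multiset.exists_eq_insert_insert_singleton {α : Type*} {m : Multiset α} {a b : α}
    (hm : card m = 3) (ha : a ∈ m) (hb : b ∈ m) (hab : a ≠ b) : ∃ c, m = {a, b, c} := by
  obtain ⟨t, rfl⟩ := exists_cons_of_mem ha
  obtain ⟨u, rfl⟩ := exists_cons_of_mem ((mem_cons.mp hb).resolve_left hab.symm)
  obtain ⟨c, rfl⟩ := card_eq_one.mp (by simpa using hm)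
  exact ⟨c, rfl⟩

namespace Polynomial

theorem splits_of_natDegree_le_card_roots_add_one {F : Type*} [Field F] {p : F[X]}
    (h : p.natDegree ≤ p.roots.card + 1) : p.Splits := by
  obtain ⟨q, hpq, hdeg, -⟩ := exists_prod_multiset_X_sub_C_mul p
  rw [← hpq]
  refine (Splits.multisetProd fun f hf => ?_).mul (Splits.of_natDegree_le_one (by omega))
  obtain ⟨a, -, rfl⟩ := Multiset.mem_map.mp hf
  exact Splits.X_sub_C a

theorem exists_pos_isRoot_of_leadingCoeff_neg {p : ℝ[X]} (h0 : 0 < p.eval 0)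
    (hlead : p.leadingCoeff < 0) : ∃ t, 0 < t ∧ p.IsRoot t := by
  have hdeg : 0 < p.degree := by
    by_contra! hdeg
    rw [eq_C_of_degree_le_zero hdeg] at h0 hlead
    simp only [eval_C, leadingCoeff_C] at h0 hlead
    linarith
  obtain ⟨M, hMneg, hM⟩ := (((p.tendsto_atBot_of_leadingCoeff_nonpos hdeg hlead.le).eventually
    (eventually_lt_atBot 0)).and (eventually_gt_atTop 0)).exists
  obtain ⟨t, ht, hroot⟩ :=
    intermediate_value_Ioo' hM.le p.continuous.continuousOn ⟨hMneg, h0⟩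
  exact ⟨t, ht.1, hroot⟩

end Polynomial

namespace Cubic

section Field

variable {F : Type*} [Field F] {P : Cubic F}

theorem roots_eq_of_vieta {x y z : F} (ha : P.a ≠ 0) (hb : P.b = P.a * -(x + y + z))
    (hc : P.c = P.a * (x * y + x * z + y * z)) (hd : P.d = P.a * -(x * y * z)) :
    P.roots = {x, y, z} := by
  obtain ⟨a, b, c, d⟩ := P
  dsimp only at ha hb hc hd
  subst hb hc hd
  rw [roots, ← C_mul_prod_X_sub_C_eq, mul_assoc, mul_assoc, roots_C_mul _ ha,
    roots_mul (by simp [X_sub_C_ne_zero]), roots_mul (by simp [X_sub_C_ne_zero]),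
    roots_X_sub_C, roots_X_sub_C, roots_X_sub_C]
  rfl

theorem map_id (P : Cubic F) : map (RingHom.id F) P = P := rfl

theorem card_roots_of_splits (ha : P.a ≠ 0) (hP : P.toPoly.Splits) : P.toPoly.roots.card = 3 := by
  simpa [map_id, roots] using (splits_iff_card_roots (φ := RingHom.id F) ha).mp (by simpa using hP)

theorem nodup_roots_of_discr_ne_zero (ha : P.a ≠ 0) (hP : P.toPoly.Splits) (hd : P.discr ≠ 0) :
    P.toPoly.roots.Nodup := by
  have hP' : (P.toPoly.map (RingHom.id F)).Splits := by simpa using hP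
  simpa [map_id, roots] using (discr_ne_zero_iff_roots_nodup ha hP').mp hd

theorem splits_of_isRoot_of_isRoot (ha : P.a ≠ 0) {s t : F} (hst : s ≠ t)
    (hs : P.toPoly.IsRoot s) (ht : P.toPoly.IsRoot t) : P.toPoly.Splits := by
  have hle : ({s, t} : Multiset F) ≤ P.toPoly.roots :=
    (Multiset.le_iff_subset (by simpa using hst)).mpr <| by
      simpa [Multiset.insert_eq_cons, mem_roots (ne_zero_of_a_ne_zero ha)] using ⟨hs, ht⟩
  refine splits_of_natDegree_le_card_roots_add_one ?_
  have hcard := Multiset.card_le_card hle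
  simp only [Multiset.insert_eq_cons, Multiset.card_cons, Multiset.card_singleton] at hcard
  rw [natDegree_of_a_ne_zero ha]
  omega

variable [LinearOrder F] [IsStrictOrderedRing F]

theorem discr_nonneg_of_splits (ha : P.a ≠ 0) (hP : P.toPoly.Splits) : 0 ≤ P.discr := by
  obtain ⟨x, y, z, h3⟩ :=
    (splits_iff_roots_eq_three (φ := RingHom.id F) ha).mp (by simpa using hP)
  have hdiscr := discr_eq_prod_three_roots ha h3
  rw [RingHom.id_apply] at hdiscr
  rw [hdiscr]
  positivity

theorem eq_of_isRoot_of_discr_neg (ha : P.a ≠ 0) (hd : P.discr < 0) {s t : F}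
    (hs : P.toPoly.IsRoot s) (ht : P.toPoly.IsRoot t) : s = t := by
  by_contra hst
  exact hd.not_ge (discr_nonneg_of_splits ha (splits_of_isRoot_of_isRoot ha hst hs ht))

theorem pos_of_isRoot (ha : P.a ≤ 0) (hb : 0 ≤ P.b) (hc : P.c ≤ 0) (hd : 0 < P.d) {x : F}
    (hx : P.toPoly.IsRoot x) : 0 < x := by
  by_contra! hx0
  have : P.a * x ^ 3 + P.b * x ^ 2 + P.c * x + P.d = 0 := by simpa [toPoly] using hx
  nlinarith [mul_nonneg_of_nonpos_of_nonpos ha (Odd.pow_nonpos (n := 3) (by decide) hx0),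
    mul_nonneg hb (sq_nonneg x), mul_nonneg_of_nonpos_of_nonpos hc hx0]

end Field

section Real

variable {P : Cubic ℝ}

theorem conj_mem_roots_map (ha : P.a ≠ 0) {w : ℂ} (hw : w ∈ (map (algebraMap ℝ ℂ) P).roots) :
    conj w ∈ (map (algebraMap ℝ ℂ) P).roots := by
  have h0 : (map (algebraMap ℝ ℂ) P).toPoly ≠ 0 :=
    ne_zero_of_a_ne_zero (by simpa [map] using ha)
  rw [mem_roots_iff h0] at hw ⊢
  simpa [map] using congrArg conj hw

theorem discr_neg_of_mem_roots_of_im_ne_zero (ha : P.a ≠ 0) {w : ℂ}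
    (hw : w ∈ (map (algebraMap ℝ ℂ) P).roots) (him : w.im ≠ 0) : P.discr < 0 := by
  have hne : w ≠ conj w := fun h => him (Complex.conj_eq_iff_im.mp h.symm)
  obtain ⟨z, h3⟩ := Multiset.exists_eq_insert_insert_singleton
    ((splits_iff_card_roots ha).mp (IsAlgClosed.splits _)) hw (conj_mem_roots_map ha hw) hne
  have haC : (P.a : ℂ) ≠ 0 := Complex.ofReal_ne_zero.mpr ha
  -- the sum of the roots is real
  have hz : conj z = z := by
    have hb := b_eq_three_roots ha h3
    have hb' := congrArg conj hb
    simp only [Complex.coe_algebraMap, Complex.conj_ofReal, map_mul, map_neg, map_add,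
      Complex.conj_conj] at hb hb'
    linear_combination -mul_left_cancel₀ haC (hb'.symm.trans hb)
  set δ : ℂ := P.a * P.a * (w - conj w) * (w - z) * (conj w - z) with hδ
  have hδconj : conj δ = -δ := by
    simp only [hδ, map_mul, map_sub, Complex.conj_ofReal, Complex.conj_conj, hz]
    ring
  have hδ0 : δ ≠ 0 := by
    have hwz : w ≠ z := fun h => hne (by rw [h, hz])
    have hwz' : conj w ≠ z := fun h => hwz (by rw [← Complex.conj_conj w, h, hz])
    simp only [hδ, ne_eq, mul_eq_zero, sub_eq_zero, haC, hne, hwz, hwz', or_self,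
      not_false_eq_true]
  have hdiscr : (P.discr : ℂ) = -(Complex.normSq δ : ℂ) := by
    rw [← Complex.mul_conj, hδconj, ← Complex.coe_algebraMap, discr_eq_prod_three_roots ha h3]
    simp only [Complex.coe_algebraMap, hδ]
    ring
  have : P.discr = -Complex.normSq δ := by exact_mod_cast hdiscr
  rw [this, neg_lt_zero]
  exact Complex.normSq_pos.mpr hδ0

theorem splits_of_discr_nonneg (ha : P.a ≠ 0) (hd : 0 ≤ P.discr) : P.toPoly.Splits := by
  refine Splits.of_splits_map (algebraMap ℝ ℂ) (IsAlgClosed.splits _) fun w hw => ?_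
  have him : w.im = 0 := by
    by_contra him
    rw [← map_roots] at hw
    exact (discr_neg_of_mem_roots_of_im_ne_zero ha hw him).not_ge hd
  exact ⟨w.re, Complex.ext (by simp) (by simp [him])⟩

end Real

end Cubic

noncomputable def etaBar : ℝ := 135/98 + (19/98) * Real.sqrt 57

theorem etaBar_bounds : 135/49 < etaBar ∧ etaBar < 20/7 := by
  have h₁ : (7.2 : ℝ) < Real.sqrt 57 := Real.lt_sqrt_of_sq_lt (by norm_num)
  have h₂ : Real.sqrt 57 < 7.6 := (Real.sqrt_lt' (by norm_num)).mpr (by norm_num)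
  constructor <;> unfold etaBar <;> linarith

theorem quadratic_eq_mul_sub_etaBar (η : ℝ) :
    49 * η ^ 2 - 135 * η - 12 = (η - etaBar) * (49 * η + 49 * etaBar - 135) := by
  have h := Real.sq_sqrt (show (0 : ℝ) ≤ 57 by norm_num)
  unfold etaBar
  linear_combination (361/196) * h

def gCubic (η : ℝ) : Cubic ℝ :=
  ⟨1024 * (η - 3), -704 * η ^ 2 + 1920 * η + 768, η * (196 * η ^ 2 - 732 * η + 288), 27 * η ^ 2⟩

theorem gCubic_a_ne_zero {η : ℝ} (h3 : η ≠ 3) : (gCubic η).a ≠ 0 := by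
  simpa [gCubic, sub_eq_zero] using h3

theorem gCubic_discr (η : ℝ) :
    (gCubic η).discr = 196608 * η ^ 3 * (49 * η ^ 2 - 135 * η - 12) * (5 * η - 12) ^ 2 *
      (7 * η - 20) ^ 2 * (3 - η) := by
  simp only [Cubic.discr, gCubic]
  ring

theorem gCubic_discr_neg {η : ℝ} (h0 : 0 < η) (hlt : η < etaBar) (h12 : η ≠ 12/5) :
    (gCubic η).discr < 0 := by
  obtain ⟨hlo, hhi⟩ := etaBar_bounds
  have h₁ : 0 < etaBar - η := by linarith
  have h₂ : 0 < 49 * η + 49 * etaBar - 135 := by linarith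
  have h₃ : 5 * η - 12 ≠ 0 := fun h => h12 (by linarith)
  have h₄ : 7 * η - 20 ≠ 0 := by intro h; linarith
  have h₅ : 0 < 3 - η := by linarith
  rw [gCubic_discr, quadratic_eq_mul_sub_etaBar, ← neg_pos]
  calc (0 : ℝ) < 196608 * η ^ 3 * (etaBar - η) * (49 * η + 49 * etaBar - 135) *
        (5 * η - 12) ^ 2 * (7 * η - 20) ^ 2 * (3 - η) := by positivity
    _ = _ := by ring

theorem gCubic_discr_nonneg {η : ℝ} (h : (etaBar < η ∧ η < 3) ∨ η = 12/5) :
    0 ≤ (gCubic η).discr := by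
  obtain ⟨hlo, -⟩ := etaBar_bounds
  rcases h with ⟨hlt, h3⟩ | rfl
  · have h₀ : 0 < η := by linarith
    have h₁ : 0 < η - etaBar := by linarith
    have h₂ : 0 < 49 * η + 49 * etaBar - 135 := by linarith
    have h₃ : 0 < 3 - η := by linarith
    rw [gCubic_discr, quadratic_eq_mul_sub_etaBar]
    positivity
  · norm_num [gCubic_discr]

theorem eq_of_gCubic_discr_eq_zero {η : ℝ} (h : (etaBar < η ∧ η < 3) ∨ η = 12/5)
    (hd : (gCubic η).discr = 0) : η = 12/5 ∨ η = 20/7 := by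
  obtain ⟨hlo, -⟩ := etaBar_bounds
  rcases h with ⟨hlt, h3⟩ | h
  · rw [gCubic_discr, quadratic_eq_mul_sub_etaBar] at hd
    simp only [mul_eq_zero, pow_eq_zero_iff, ne_eq, OfNat.ofNat_ne_zero, not_false_eq_true,
      sub_eq_zero, false_or] at hd
    rcases hd with (((h | h | h) | h) | h) | h <;>
      first | (left; linarith) | (right; linarith)
  · exact Or.inl h

theorem gCubic_root_pos {η x : ℝ} (h12 : 12/5 ≤ η) (h3 : η < 3)
    (hx : (gCubic η).toPoly.IsRoot x) : 0 < x := by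
  refine Cubic.pos_of_isRoot ?_ ?_ ?_ ?_ hx <;> simp only [gCubic]
  · linarith
  · nlinarith
  · nlinarith [mul_nonneg (sub_nonneg.mpr h12) (sub_nonneg.mpr h3.le)]
  · positivity

theorem gCubic_twelve_fifths_roots : (gCubic (12/5)).toPoly.roots = {9/20, 9/20, 5/4} :=
  Cubic.roots_eq_of_vieta (by norm_num [gCubic]) (by norm_num [gCubic]) (by norm_num [gCubic])
    (by norm_num [gCubic])

theorem gCubic_twenty_sevenths_roots : (gCubic (20/7)).toPoly.roots = {5/4, 5/4, 27/28} :=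
  Cubic.roots_eq_of_vieta (by norm_num [gCubic]) (by norm_num [gCubic]) (by norm_num [gCubic])
    (by norm_num [gCubic])

theorem gCubic_etaBar_roots :
    (gCubic etaBar).toPoly.roots = {(9 + Real.sqrt 57) / 16, (9 + Real.sqrt 57) / 16,
      (7911 + 1035 * Real.sqrt 57) / 12544} := by
  have h := Real.sq_sqrt (show (0 : ℝ) ≤ 57 by norm_num)
  refine Cubic.roots_eq_of_vieta (gCubic_a_ne_zero (by linarith [etaBar_bounds.2])) ?_ ?_ ?_ <;>
    simp only [gCubic, etaBar]
  -- each coefficient is the quotient of the difference of the two sides by `√57² - 57`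
  · linear_combination (722/49) * h
  · linear_combination (-206307/9604 - 13395/9604 * Real.sqrt 57) * h
  · linear_combination (1511217/307328 + 169857/153664 * Real.sqrt 57 +
      19665/307328 * Real.sqrt 57 ^ 2) * h

theorem gCubic_unique_pos_root {η : ℝ} (h0 : 0 < η) (hlt : η < etaBar) (h12 : η ≠ 12/5) :
    ∃ t, 0 < t ∧ (gCubic η).toPoly.IsRoot t ∧ ∀ s, (gCubic η).toPoly.IsRoot s → s = t := by
  have ha : (gCubic η).a < 0 := by
    have := etaBar_bounds.2
    simp only [gCubic]
    linarith
  obtain ⟨t, ht, hroot⟩ := exists_pos_isRoot_of_leadingCoeff_neg (p := (gCubic η).toPoly)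
    (by simp [Cubic.toPoly, gCubic]; positivity)
    (by rwa [Cubic.leadingCoeff_of_a_ne_zero ha.ne])
  exact ⟨t, ht, hroot, fun s hs =>
    Cubic.eq_of_isRoot_of_discr_neg ha.ne (gCubic_discr_neg h0 hlt h12) hs hroot⟩

theorem gCubic_three_pos_roots {η : ℝ} (h : (etaBar < η ∧ η < 3) ∨ η = 12/5) :
    (gCubic η).toPoly.roots.card = 3 ∧ (∀ x ∈ (gCubic η).toPoly.roots, 0 < x) ∧
      ((∃ x, rootMultiplicity x (gCubic η).toPoly = 2) ↔ (η = 12/5 ∨ η = 20/7)) := by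
  have hη : 12/5 ≤ η ∧ η < 3 := by
    have := etaBar_bounds.1
    rcases h with ⟨h1, h2⟩ | rfl
    · constructor <;> linarith
    · norm_num
  have ha := gCubic_a_ne_zero hη.2.ne
  have hsplit := Cubic.splits_of_discr_nonneg ha (gCubic_discr_nonneg h)
  refine ⟨Cubic.card_roots_of_splits ha hsplit,
    fun x hx => gCubic_root_pos hη.1 hη.2 (isRoot_of_mem_roots hx), ⟨fun ⟨x, hx⟩ => ?_, ?_⟩⟩
  · refine eq_of_gCubic_discr_eq_zero h (not_not.mp fun hd => ?_)
    have hcount := Multiset.nodup_iff_count_le_one.mp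
      (Cubic.nodup_roots_of_discr_ne_zero ha hsplit hd) x
    rw [count_roots, hx] at hcount
    omega
  · rintro (rfl | rfl)
    · exact ⟨9/20, by rw [← count_roots, gCubic_twelve_fifths_roots]; norm_num⟩
    · exact ⟨5/4, by rw [← count_roots, gCubic_twenty_sevenths_roots]; norm_num⟩

theorem gCubic_simple_and_double_root {η : ℝ} (hη : η = etaBar) :
    ∃ a b, 0 < a ∧ 0 < b ∧ a ≠ b ∧ rootMultiplicity a (gCubic η).toPoly = 1 ∧
      rootMultiplicity b (gCubic η).toPoly = 2 ∧
      ∀ s, (gCubic η).toPoly.IsRoot s → s = a ∨ s = b := by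
  subst hη
  have hne : (7911 + 1035 * Real.sqrt 57) / 12544 ≠ (9 + Real.sqrt 57) / 16 := by
    have := Real.sqrt_nonneg 57
    intro h
    linarith
  refine ⟨_, _, by positivity, by positivity, hne, ?_, ?_, fun s hs => ?_⟩
  · rw [← count_roots, gCubic_etaBar_roots]
    simp [hne]
  · rw [← count_roots, gCubic_etaBar_roots]
    simp [hne.symm]
  · have hmem := (mem_roots (Cubic.ne_zero_of_a_ne_zero
      (gCubic_a_ne_zero (by linarith [etaBar_bounds.2])))).mpr hs
    rw [gCubic_etaBar_roots] at hmem
    simp at hmem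
    tauto

open Polynomial in
/-- Real-root structure of the cubic
`g(ρ) = 1024(η − 3)ρ³ + (−704η² + 1920η + 768)ρ² + η(196η² − 732η + 288)ρ + 27η²`,
with `η̄ = 135/98 + (19/98)√57`: for `η ∈ (0, η̄)`, `η ≠ 12/5`, it has exactly one real
root, which is positive; for `η ∈ (η̄, 3)` or `η = 12/5`, it has three real roots
counted with multiplicity (with a double root exactly when `η = 12/5` or `η = 20/7`),
all positive; for `η = η̄` it has exactly one simple and one double real root,
both positive. -/
theorem cubic_g_real_roots (η : ℝ) :
    let g : Polynomial ℝ :=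
      C (1024 * (η - 3)) * X ^ 3 + C (-704 * η ^ 2 + 1920 * η + 768) * X ^ 2 +
        C (η * (196 * η ^ 2 - 732 * η + 288)) * X + C (27 * η ^ 2)
    let η' : ℝ := 135/98 + (19/98) * Real.sqrt 57
    ((0 < η ∧ η < η' ∧ η ≠ 12/5) →
      ∃ t, 0 < t ∧ g.IsRoot t ∧ ∀ s, g.IsRoot s → s = t) ∧
    (((η' < η ∧ η < 3) ∨ η = 12/5) →
      (g.roots.card = 3 ∧ (∀ x ∈ g.roots, 0 < x) ∧
        ((∃ x : ℝ, Polynomial.rootMultiplicity x g = 2) ↔ (η = 12/5 ∨ η = 20/7)))) ∧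
    (η = η' →
      ∃ a b, 0 < a ∧ 0 < b ∧ a ≠ b ∧
        Polynomial.rootMultiplicity a g = 1 ∧ Polynomial.rootMultiplicity b g = 2 ∧
        ∀ s, g.IsRoot s → s = a ∨ s = b) := by
  intro g η'
  exact ⟨fun ⟨h0, hlt, h12⟩ => gCubic_unique_pos_root h0 hlt h12, gCubic_three_pos_roots,
    gCubic_simple_and_double_root⟩
end

section
/- Let 0 < η < 3 and let v₀, v₁, v₂, v₃ ∈ ℝ³ be the vertices of a triangular pyramid with parameter η: ‖vᵢ − vⱼ‖² = η for 1 ≤ i < j ≤ 3 and ‖v₀ − vᵢ‖² = 1 for i = 1, 2, 3. Let R_T be the circumradius of the tetrahedron and c its circumcenter. Suppose P ∈ ℝ³ is a point such that there exist w₀, w₁, w₂, w₃ ∈ ℝ³ with, for each j ∈ {0,1,2,3}, ‖wⱼ − vᵢ‖ = R_T for all i ≠ j and ‖wⱼ − P‖ = R_T. Then at least one of the following holds: (a) ‖P − v₁‖ = ‖P − v₂‖ = ‖P − v₃‖ (P is equidistant from the base vertices); (b) P lies in the affine plane spanned by v₁, v₂, v₃; (c) ‖P − c‖ = R_T (P lies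 on the circumsphere of the tetrahedron). -/
open scoped InnerProductSpace

private lemma norm_eq_of_sq_eq' {x y : EuclideanSpace ℝ (Fin 3)} (h : ‖x‖ ^ 2 = ‖y‖ ^ 2) :
    ‖x‖ = ‖y‖ := by
  have hx := Real.sqrt_sq (norm_nonneg x)
  have hy := Real.sqrt_sq (norm_nonneg y)
  rw [← hx, ← hy, h]

private lemma two_inner_eq' (x a b : EuclideanSpace ℝ (Fin 3)) (r : ℝ)
    (h1 : dist x a = r) (h2 : dist x b = r) :
    2 * ⟪x - b, a - b⟫_ℝ = ⟪a - b, a - b⟫_ℝ := by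
  have h : ‖x - a‖ ^ 2 = ‖x - b‖ ^ 2 := by
    rw [← dist_eq_norm, ← dist_eq_norm, h1, h2]
  have hx : x - a = (x - b) - (a - b) := by abel
  rw [hx, norm_sub_sq_real] at h
  have e1 : ⟪a - b, a - b⟫_ℝ = ‖a - b‖ ^ 2 := real_inner_self_eq_norm_sq _
  linarith

private lemma keyg' (η g0 g1 g2 : ℝ) (hη0 : 0 < η) (hη3 : η < 3)
    (h0 : g0 * 1 + g1 * (1 - η / 2) + g2 * (1 - η / 2) = 0)
    (h1 : g0 * (1 - η / 2) + g1 * 1 + g2 * (1 - η / 2) = 0)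
    (h2 : g0 * (1 - η / 2) + g1 * (1 - η / 2) + g2 * 1 = 0) :
    g0 = 0 := by
  have hS : (g0 + g1 + g2) * (3 - η) = 0 := by linear_combination h0 + h1 + h2
  have h3 : (3 : ℝ) - η ≠ 0 := by linarith
  have hS' : g0 + g1 + g2 = 0 := by
    rcases mul_eq_zero.mp hS with h | h
    · exact h
    · exact absurd h h3
  have hg : g0 * (η / 2) = 0 := by linear_combination h0 - (1 - η / 2) * hS'
  have hhalf : η / 2 ≠ 0 := by positivity
  rcases mul_eq_zero.mp hg with h | h
  · exact h
  · exact absurd h hhalf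

private lemma keyb' (η b m0 m1 m2 : ℝ) (hη0 : 0 < η) (hη3 : η < 3) (hb : b ≠ 0)
    (hE0 : m0 * 1 + m1 * (1 - η / 2) + m2 * (1 - η / 2) = b)
    (hE1 : m0 * (1 - η / 2) + m1 * 1 + m2 * (1 - η / 2) = 0)
    (hE2 : m0 * (1 - η / 2) + m1 * (1 - η / 2) + m2 * 1 = 0)
    (hDC : m0 * b + (m0 + m1 + m2) = 0) :
    b * (4 - η) = -η := by
  have hS : (m0 + m1 + m2) * (3 - η) = b := by linear_combination hE0 + hE1 + hE2
  have key : b * (b * (4 - η) + η) = 0 := by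
    linear_combination (-2 * (3 - η) * b) * hE0 + ((3 - η) * η) * hDC
      + (2 * b * (1 - η / 2) - η) * hS
  rcases mul_eq_zero.mp key with h | h
  · exact absurd h hb
  · linarith

/-- For a triangular pyramid with parameter `η ∈ (0, 3)`, circumcenter `c` and
circumradius `R`, if a point `P` lies on four spheres of radius `R` each containing
the three vertices other than one vertex, then `P` is equidistant from the base
vertices, or `P` lies in the plane of the base, or `P` lies on the circumsphere. -/
theorem pyramid_circumradius_common_point (η : ℝ) (hη0 : 0 < η) (hη3 : η < 3)
    (v : Fin 4 → EuclideanSpace ℝ (Fin 3))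
    (hbase : ∀ i j, i ≠ j → i ≠ 0 → j ≠ 0 → dist (v i) (v j) ^ 2 = η)
    (hapex : ∀ i, i ≠ 0 → dist (v 0) (v i) ^ 2 = 1)
    (c : EuclideanSpace ℝ (Fin 3)) (R : ℝ) (hR : 0 ≤ R)
    (hc : ∀ i, dist c (v i) = R)
    (P : EuclideanSpace ℝ (Fin 3)) (w : Fin 4 → EuclideanSpace ℝ (Fin 3))
    (hw : ∀ j i, i ≠ j → dist (w j) (v i) = R)
    (hwP : ∀ j, dist (w j) P = R) :
    (dist P (v 1) = dist P (v 2) ∧ dist P (v 2) = dist P (v 3)) ∨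
      P ∈ affineSpan ℝ ({v 1, v 2, v 3} : Set (EuclideanSpace ℝ (Fin 3))) ∨
      dist P c = R := by
  classical
  by_cases hPc : dist P c = R
  · exact Or.inr (Or.inr hPc)
  set e : Fin 3 → EuclideanSpace ℝ (Fin 3) := fun k => v k.succ - v 0 with he
  set p : EuclideanSpace ℝ (Fin 3) := P - v 0 with hp
  set q : EuclideanSpace ℝ (Fin 3) := c - v 0 with hq
  set d : Fin 3 → EuclideanSpace ℝ (Fin 3) := fun k => (w k.succ - v 0) - q with hd
  -- Gram matrix facts
  have gram_diag : ∀ k, ⟪e k, e k⟫_ℝ = 1 := by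
    intro k
    have h := hapex k.succ (Fin.succ_ne_zero k)
    rw [dist_eq_norm, norm_sub_rev] at h
    simp only [he]
    rw [real_inner_self_eq_norm_sq]
    exact h
  have gram_off : ∀ k l, k ≠ l → ⟪e k, e l⟫_ℝ = 1 - η / 2 := by
    intro k l hkl
    have hne : k.succ ≠ l.succ := by simpa [Fin.succ_inj] using hkl
    have h := hbase k.succ l.succ hne (Fin.succ_ne_zero k) (Fin.succ_ne_zero l)
    rw [dist_eq_norm] at h
    have hvec : v k.succ - v l.succ = e k - e l := by simp only [he]; abel
    rw [hvec, norm_sub_sq_real] at h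
    have d1 : ‖e k‖ ^ 2 = 1 := by
      have := gram_diag k; rwa [real_inner_self_eq_norm_sq] at this
    have d2 : ‖e l‖ ^ 2 = 1 := by
      have := gram_diag l; rwa [real_inner_self_eq_norm_sq] at this
    linarith
  -- inner products with q
  have hq_e : ∀ k, 2 * ⟪q, e k⟫_ℝ = 1 := by
    intro k
    have h := two_inner_eq' c (v k.succ) (v 0) R (hc k.succ) (hc 0)
    have hgd := gram_diag k
    simp only [he] at hgd
    simp only [hq, he]
    rw [h, hgd]
  have hq_q : ⟪q, q⟫_ℝ = R ^ 2 := by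
    have h := hc 0
    rw [dist_eq_norm] at h
    simp only [hq]
    rw [real_inner_self_eq_norm_sq, h]
  -- inner products with w-points
  have hu_e : ∀ k l, l ≠ k → 2 * ⟪w k.succ - v 0, e l⟫_ℝ = 1 := by
    intro k l hlk
    have hne : l.succ ≠ k.succ := by simpa [Fin.succ_inj] using hlk
    have h := two_inner_eq' (w k.succ) (v l.succ) (v 0) R (hw k.succ l.succ hne)
      (hw k.succ 0 (Fin.succ_ne_zero k).symm)
    have hgd := gram_diag l
    simp only [he] at hgd
    simp only [he]
    rw [h, hgd]
  have hu_u : ∀ k : Fin 3, ⟪w k.succ - v 0, w k.succ - v 0⟫_ℝ = R ^ 2 := by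
    intro k
    have h := hw k.succ 0 (Fin.succ_ne_zero k).symm
    rw [dist_eq_norm] at h
    rw [real_inner_self_eq_norm_sq, h]
  have hu_p : ∀ k : Fin 3, 2 * ⟪w k.succ - v 0, p⟫_ℝ = ⟪p, p⟫_ℝ := by
    intro k
    have h := two_inner_eq' (w k.succ) P (v 0) R (hwP k.succ)
      (hw k.succ 0 (Fin.succ_ne_zero k).symm)
    simpa only [hp] using h
  -- facts about d
  have hd_e : ∀ k l, l ≠ k → ⟪d k, e l⟫_ℝ = 0 := by
    intro k l hlk
    simp only [hd]
    rw [inner_sub_left]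
    have h1 := hu_e k l hlk
    have h2 := hq_e l
    linarith
  set Del : ℝ := ⟪p, p⟫_ℝ - 2 * ⟪p, q⟫_ℝ with hDel
  have hPC : dist P c ^ 2 = Del + R ^ 2 := by
    rw [dist_eq_norm]
    have hvec : P - c = p - q := by simp only [hp, hq]; abel
    rw [hvec, ← real_inner_self_eq_norm_sq, real_inner_sub_sub_self, hq_q, hDel]
  have hDelne : Del ≠ 0 := by
    intro h0
    apply hPc
    have hsq : dist P c ^ 2 = R ^ 2 := by rw [hPC, h0]; ring
    have h1 : (dist P c - R) * (dist P c + R) = 0 := by linear_combination hsq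
    rcases mul_eq_zero.mp h1 with h | h
    · linarith
    · have hd0 := dist_nonneg (x := P) (y := c)
      linarith
  have hd_p : ∀ k, 2 * ⟪d k, p⟫_ℝ = Del := by
    intro k
    simp only [hd]
    rw [inner_sub_left]
    have h1 := hu_p k
    have h2 : ⟪q, p⟫_ℝ = ⟪p, q⟫_ℝ := real_inner_comm _ _
    rw [hDel]
    linarith
  have hd_dq : ∀ k, ⟪d k, d k⟫_ℝ + 2 * ⟪d k, q⟫_ℝ = 0 := by
    intro k
    simp only [hd]
    have hexp : ⟪(w k.succ - v 0) - q, (w k.succ - v 0) - q⟫_ℝ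
        = ⟪w k.succ - v 0, w k.succ - v 0⟫_ℝ - 2 * ⟪w k.succ - v 0, q⟫_ℝ + ⟪q, q⟫_ℝ :=
      real_inner_sub_sub_self _ _
    have hq2 : ⟪(w k.succ - v 0) - q, q⟫_ℝ = ⟪w k.succ - v 0, q⟫_ℝ - ⟪q, q⟫_ℝ :=
      inner_sub_left _ _ _
    rw [hexp, hq2, hu_u k, hq_q]
    ring
  -- e is a spanning family
  have hspan : Submodule.span ℝ (Set.range e) = ⊤ := by
    have hli : LinearIndependent ℝ e := by
      rw [Fintype.linearIndependent_iff]
      intro g hg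
      have hip : ∀ l, g 0 * ⟪e 0, e l⟫_ℝ + g 1 * ⟪e 1, e l⟫_ℝ + g 2 * ⟪e 2, e l⟫_ℝ = 0 := by
        intro l
        have h0 : ⟪∑ i, g i • e i, e l⟫_ℝ = 0 := by rw [hg]; exact inner_zero_left _
        rwa [Fin.sum_univ_three, inner_add_left, inner_add_left, real_inner_smul_left,
          real_inner_smul_left, real_inner_smul_left] at h0
      have h0 := hip 0
      rw [gram_diag 0, gram_off 1 0 (by decide), gram_off 2 0 (by decide)] at h0
      have h1 := hip 1
      rw [gram_diag 1, gram_off 0 1 (by decide), gram_off 2 1 (by decide)] at h1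
      have h2 := hip 2
      rw [gram_diag 2, gram_off 0 2 (by decide), gram_off 1 2 (by decide)] at h2
      intro i
      fin_cases i
      · exact keyg' η (g 0) (g 1) (g 2) hη0 hη3 (by linear_combination h0)
          (by linear_combination h1) (by linear_combination h2)
      · exact keyg' η (g 1) (g 0) (g 2) hη0 hη3 (by linear_combination h1)
          (by linear_combination h0) (by linear_combination h2)
      · exact keyg' η (g 2) (g 0) (g 1) hη0 hη3 (by linear_combination h2)
          (by linear_combination h0) (by linear_combination h1)
    have hcard : Fintype.card (Fin 3) = Module.finrank ℝ (EuclideanSpace ℝ (Fin 3)) := by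
      simp [finrank_euclideanSpace_fin]
    exact hli.span_eq_top_of_card_eq_finrank hcard
  have hcoef : ∀ x : EuclideanSpace ℝ (Fin 3), ∃ a : Fin 3 → ℝ,
      a 0 • e 0 + a 1 • e 1 + a 2 • e 2 = x := by
    intro x
    have hx : x ∈ Submodule.span ℝ (Set.range e) := by rw [hspan]; trivial
    obtain ⟨a, ha⟩ := (Submodule.mem_span_range_iff_exists_fun ℝ).mp hx
    refine ⟨a, ?_⟩
    rw [← Fin.sum_univ_three (fun i => a i • e i)]
    exact ha
  obtain ⟨a, hap⟩ := hcoef p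
  have hpe : ∀ l, ⟪p, e l⟫_ℝ = a 0 * ⟪e 0, e l⟫_ℝ + a 1 * ⟪e 1, e l⟫_ℝ + a 2 * ⟪e 2, e l⟫_ℝ := by
    intro l
    rw [← hap, inner_add_left, inner_add_left, real_inner_smul_left, real_inner_smul_left,
      real_inner_smul_left]
  -- main computation: a k * (2η) = -(Del * (4 - η)) for each k
  have hak : ∀ k, a k * (2 * η) = -(Del * (4 - η)) := by
    intro k
    obtain ⟨m, hm⟩ := hcoef (d k)
    have hE : ∀ l, ⟪d k, e l⟫_ℝ
        = m 0 * ⟪e 0, e l⟫_ℝ + m 1 * ⟪e 1, e l⟫_ℝ + m 2 * ⟪e 2, e l⟫_ℝ := by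
      intro l
      rw [← hm, inner_add_left, inner_add_left, real_inner_smul_left, real_inner_smul_left,
        real_inner_smul_left]
    have hdq2 : 2 * ⟪d k, q⟫_ℝ = m 0 + m 1 + m 2 := by
      have hcomm : ⟪d k, q⟫_ℝ = ⟪q, d k⟫_ℝ := real_inner_comm _ _
      rw [hcomm, ← hm, inner_add_right, inner_add_right, real_inner_smul_right,
        real_inner_smul_right, real_inner_smul_right]
      have q0 := hq_e 0
      have q1 := hq_e 1
      have q2 := hq_e 2
      linear_combination m 0 * q0 + m 1 * q1 + m 2 * q2
    have hdd : ⟪d k, d k⟫_ℝ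
        = m 0 * ⟪d k, e 0⟫_ℝ + m 1 * ⟪d k, e 1⟫_ℝ + m 2 * ⟪d k, e 2⟫_ℝ := by
      nth_rewrite 1 [← hm]
      rw [inner_add_left, inner_add_left, real_inner_smul_left, real_inner_smul_left,
        real_inner_smul_left, real_inner_comm (d k) (e 0), real_inner_comm (d k) (e 1),
        real_inner_comm (d k) (e 2)]
    have hdpa : ⟪d k, p⟫_ℝ
        = a 0 * ⟪d k, e 0⟫_ℝ + a 1 * ⟪d k, e 1⟫_ℝ + a 2 * ⟪d k, e 2⟫_ℝ := by
      rw [← hap, inner_add_right, inner_add_right, real_inner_smul_right, real_inner_smul_right,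
        real_inner_smul_right]
    have hE0 := hE 0
    rw [gram_diag 0, gram_off 1 0 (by decide), gram_off 2 0 (by decide)] at hE0
    have hE1 := hE 1
    rw [gram_diag 1, gram_off 0 1 (by decide), gram_off 2 1 (by decide)] at hE1
    have hE2 := hE 2
    rw [gram_diag 2, gram_off 0 2 (by decide), gram_off 1 2 (by decide)] at hE2
    have hDQ := hd_dq k
    have hDP := hd_p k
    fin_cases k
    · simp only [Fin.zero_eta, Fin.isValue] at hDP hDQ hdd hdpa hdq2 hE0 hE1 hE2 ⊢
      have z1 : ⟪d 0, e 1⟫_ℝ = 0 := hd_e 0 1 (by decide)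
      have z2 : ⟪d 0, e 2⟫_ℝ = 0 := hd_e 0 2 (by decide)
      have habk : 2 * (a 0 * ⟪d 0, e 0⟫_ℝ) = Del := by
        rw [hdpa, z1, z2] at hDP
        linarith
      have hbne : ⟪d 0, e 0⟫_ℝ ≠ 0 := by
        intro h0
        rw [h0] at habk
        exact hDelne (by linarith)
      have hDC : m 0 * ⟪d 0, e 0⟫_ℝ + (m 0 + m 1 + m 2) = 0 := by
        rw [hdd, z1, z2] at hDQ
        linarith [hdq2]
      have hbv := keyb' η (⟪d 0, e 0⟫_ℝ) (m 0) (m 1) (m 2) hη0 hη3 hbne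
        (by linear_combination -hE0) (by linear_combination z1 - hE1)
        (by linear_combination z2 - hE2) hDC
      linear_combination (-(4 - η)) * habk + 2 * a 0 * hbv
    · simp only [Fin.mk_one, Fin.isValue] at hDP hDQ hdd hdpa hdq2 hE0 hE1 hE2 ⊢
      have z1 : ⟪d 1, e 0⟫_ℝ = 0 := hd_e 1 0 (by decide)
      have z2 : ⟪d 1, e 2⟫_ℝ = 0 := hd_e 1 2 (by decide)
      have habk : 2 * (a 1 * ⟪d 1, e 1⟫_ℝ) = Del := by
        rw [hdpa, z1, z2] at hDP
        linarith
      have hbne : ⟪d 1, e 1⟫_ℝ ≠ 0 := by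
        intro h0
        rw [h0] at habk
        exact hDelne (by linarith)
      have hDC : m 1 * ⟪d 1, e 1⟫_ℝ + (m 0 + m 1 + m 2) = 0 := by
        rw [hdd, z1, z2] at hDQ
        linarith [hdq2]
      have hbv := keyb' η (⟪d 1, e 1⟫_ℝ) (m 1) (m 0) (m 2) hη0 hη3 hbne
        (by linear_combination -hE1) (by linear_combination z1 - hE0)
        (by linear_combination z2 - hE2) (by linear_combination hDC)
      linear_combination (-(4 - η)) * habk + 2 * a 1 * hbv
    · simp only [Fin.reduceFinMk, Fin.isValue] at hDP hDQ hdd hdpa hdq2 hE0 hE1 hE2 ⊢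
      have z1 : ⟪d 2, e 0⟫_ℝ = 0 := hd_e 2 0 (by decide)
      have z2 : ⟪d 2, e 1⟫_ℝ = 0 := hd_e 2 1 (by decide)
      have habk : 2 * (a 2 * ⟪d 2, e 2⟫_ℝ) = Del := by
        rw [hdpa, z1, z2] at hDP
        linarith
      have hbne : ⟪d 2, e 2⟫_ℝ ≠ 0 := by
        intro h0
        rw [h0] at habk
        exact hDelne (by linarith)
      have hDC : m 2 * ⟪d 2, e 2⟫_ℝ + (m 0 + m 1 + m 2) = 0 := by
        rw [hdd, z1, z2] at hDQ
        linarith [hdq2]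
      have hbv := keyb' η (⟪d 2, e 2⟫_ℝ) (m 2) (m 0) (m 1) hη0 hη3 hbne
        (by linear_combination -hE2) (by linear_combination z1 - hE0)
        (by linear_combination z2 - hE1) (by linear_combination hDC)
      linear_combination (-(4 - η)) * habk + 2 * a 2 * hbv
  have h2η : (2 : ℝ) * η ≠ 0 := by positivity
  have ha01 : a 0 = a 1 := mul_right_cancel₀ h2η ((hak 0).trans (hak 1).symm)
  have ha12 : a 1 = a 2 := mul_right_cancel₀ h2η ((hak 1).trans (hak 2).symm)
  -- conclude equidistance
  have hsucc0 : (Fin.succ (0 : Fin 3)) = (1 : Fin 4) := by decide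
  have hsucc1 : (Fin.succ (1 : Fin 3)) = (2 : Fin 4) := by decide
  have hsucc2 : (Fin.succ (2 : Fin 3)) = (3 : Fin 4) := by decide
  have hdist : ∀ k l : Fin 3, a k = a l → (a k = a l → True) →
      True := fun _ _ _ _ => trivial
  have hnorm : ∀ k : Fin 3, ‖p - e k‖ ^ 2 = ⟪p, p⟫_ℝ - 2 * ⟪p, e k⟫_ℝ + 1 := by
    intro k
    rw [norm_sub_sq_real, ← real_inner_self_eq_norm_sq]
    have hek : ‖e k‖ ^ 2 = 1 := by
      have := gram_diag k; rwa [real_inner_self_eq_norm_sq] at this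
    rw [hek]
  have i0 := hpe 0
  rw [gram_diag 0, gram_off 1 0 (by decide), gram_off 2 0 (by decide)] at i0
  have i1 := hpe 1
  rw [gram_diag 1, gram_off 0 1 (by decide), gram_off 2 1 (by decide)] at i1
  have i2 := hpe 2
  rw [gram_diag 2, gram_off 0 2 (by decide), gram_off 1 2 (by decide)] at i2
  left
  constructor
  · rw [dist_eq_norm, dist_eq_norm]
    have r1 : P - v 1 = p - e 0 := by simp only [hp, he, hsucc0]; abel
    have r2 : P - v 2 = p - e 1 := by simp only [hp, he, hsucc1]; abel
    rw [r1, r2]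
    apply norm_eq_of_sq_eq'
    rw [hnorm 0, hnorm 1, i0, i1]
    linear_combination (-η) * ha01
  · rw [dist_eq_norm, dist_eq_norm]
    have r2 : P - v 2 = p - e 1 := by simp only [hp, he, hsucc1]; abel
    have r3 : P - v 3 = p - e 2 := by simp only [hp, he, hsucc2]; abel
    rw [r2, r3]
    apply norm_eq_of_sq_eq'
    rw [hnorm 1, hnorm 2, i1, i2]
    linear_combination (-η) * ha12
end
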